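/- arXiv:2503.13376 — 5 statements merged into one kernel-verified Lean document; each statement's English description precedes it below -/
import Mathlib

section
/- Let H be a separable Hilbert space and (W_j) a sequence of bounded operators on H such that the series ∑_j W_j* W_j converges weakly to a bounded operator. Then for every bounded operator A on H, the partial sums ∑_{j=1}^N W_j* A W_j converge in the weak operator topology to a bounded operator Φ'(A), and ‖Φ'(A)‖ ≤ ‖A‖ · ‖Φ'(1)‖. -/
open scoped InnerProductSpace

/-- If `(W j)` are bounded operators on a separable Hilbert space such that
`∑ j, (W j)† (W j)` converges in the weak operator topology to a bounded operator `Y = Φ'(1)`,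
then for every bounded `A` the partial sums `∑_{j<N} (W j)† A (W j)` converge in the weak
operator topology to a bounded operator `ΦA`, and `‖ΦA‖ ≤ ‖A‖ * ‖Y‖`. -/
theorem stmt0
    {H : Type*} [NormedAddCommGroup H] [InnerProductSpace ℂ H] [CompleteSpace H]
    [TopologicalSpace.SeparableSpace H]
    (W : ℕ → H →L[ℂ] H) (Y : H →L[ℂ] H)
    (hY : ∀ x y : H,
      HasSum (fun j => ⟪x, ((W j).adjoint ∘L (W j)) y⟫_ℂ) ⟪x, Y y⟫_ℂ) :
    ∀ A : H →L[ℂ] H, ∃ ΦA : H →L[ℂ] H,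
      (∀ x y : H,
        HasSum (fun j => ⟪x, ((W j).adjoint ∘L A ∘L (W j)) y⟫_ℂ) ⟪x, ΦA y⟫_ℂ) ∧
      ‖ΦA‖ ≤ ‖A‖ * ‖Y‖ := by
  intro A
  -- sum of squares of ‖W j x‖
  have hsq : ∀ x : H, HasSum (fun j => ‖W j x‖ ^ 2) (Complex.re ⟪x, Y x⟫_ℂ) := by
    intro x
    have h := (hY x x).mapL Complex.reCLM
    have hfun : (fun j => Complex.reCLM ⟪x, ((W j).adjoint ∘L (W j)) x⟫_ℂ)
        = fun j => ‖W j x‖ ^ 2 := by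
      funext j
      simp only [Complex.reCLM_apply, ContinuousLinearMap.comp_apply,
        ContinuousLinearMap.adjoint_inner_right]
      rw [inner_self_eq_norm_sq_to_K]
      simp [← Complex.ofReal_pow]
    rw [hfun] at h
    simpa using h
  have hSle : ∀ x : H, Complex.re ⟪x, Y x⟫_ℂ ≤ ‖Y‖ * ‖x‖ ^ 2 := by
    intro x
    calc Complex.re ⟪x, Y x⟫_ℂ ≤ ‖⟪x, Y x⟫_ℂ‖ := Complex.re_le_norm _
      _ ≤ ‖x‖ * ‖Y x‖ := norm_inner_le_norm _ _
      _ ≤ ‖x‖ * (‖Y‖ * ‖x‖) := by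
          gcongr; exact Y.le_opNorm x
      _ = ‖Y‖ * ‖x‖ ^ 2 := by ring
  have hterm : ∀ x y : H, ∀ j, ‖⟪W j x, A (W j y)⟫_ℂ‖ ≤ ‖A‖ * (‖W j x‖ * ‖W j y‖) := by
    intro x y j
    calc ‖⟪W j x, A (W j y)⟫_ℂ‖ ≤ ‖W j x‖ * ‖A (W j y)‖ := norm_inner_le_norm _ _
      _ ≤ ‖W j x‖ * (‖A‖ * ‖W j y‖) := by gcongr; exact A.le_opNorm _
      _ = ‖A‖ * (‖W j x‖ * ‖W j y‖) := by ring
  have habs : ∀ x y : H, Summable (fun j => ‖⟪W j x, A (W j y)⟫_ℂ‖) := by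
    intro x y
    refine Summable.of_nonneg_of_le (fun j => norm_nonneg _) (fun j => ?_)
      (((hsq x).summable.add (hsq y).summable).mul_left (‖A‖ / 2))
    refine (hterm x y j).trans ?_
    have h1 : ‖W j x‖ * ‖W j y‖ ≤ (‖W j x‖ ^ 2 + ‖W j y‖ ^ 2) / 2 := by
      nlinarith [sq_nonneg (‖W j x‖ - ‖W j y‖)]
    calc ‖A‖ * (‖W j x‖ * ‖W j y‖) ≤ ‖A‖ * ((‖W j x‖ ^ 2 + ‖W j y‖ ^ 2) / 2) := by
          gcongr
      _ = ‖A‖ / 2 * (‖W j x‖ ^ 2 + ‖W j y‖ ^ 2) := by ring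
  have hsum : ∀ x y : H, Summable (fun j => ⟪W j x, A (W j y)⟫_ℂ) :=
    fun x y => (habs x y).of_norm
  -- Cauchy-Schwarz bound
  have hprod : ∀ x y : H, Summable (fun j => ‖W j x‖ * ‖W j y‖) := by
    intro x y
    refine Summable.of_nonneg_of_le (fun j => by positivity) (fun j => ?_)
      (((hsq x).summable.add (hsq y).summable).mul_left (1 / 2))
    nlinarith [sq_nonneg (‖W j x‖ - ‖W j y‖)]
  have hCS : ∀ x y : H, (∑' j, ‖W j x‖ * ‖W j y‖) ≤ ‖Y‖ * ‖x‖ * ‖y‖ := by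
    intro x y
    refine Summable.tsum_le_of_sum_le (hprod x y) (fun s => ?_)
    have h2 : (∑ j ∈ s, ‖W j x‖ * ‖W j y‖) ^ 2 ≤
        (∑ j ∈ s, ‖W j x‖ ^ 2) * (∑ j ∈ s, ‖W j y‖ ^ 2) :=
      Finset.sum_mul_sq_le_sq_mul_sq s _ _
    have hx : (∑ j ∈ s, ‖W j x‖ ^ 2) ≤ ‖Y‖ * ‖x‖ ^ 2 :=
      le_trans (sum_le_hasSum s (fun j _ => by positivity) (hsq x)) (hSle x)
    have hy : (∑ j ∈ s, ‖W j y‖ ^ 2) ≤ ‖Y‖ * ‖y‖ ^ 2 :=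
      le_trans (sum_le_hasSum s (fun j _ => by positivity) (hsq y)) (hSle y)
    have hs0 : 0 ≤ ∑ j ∈ s, ‖W j x‖ * ‖W j y‖ :=
      Finset.sum_nonneg (fun j _ => by positivity)
    have hY0 : (0:ℝ) ≤ ‖Y‖ * ‖x‖ * ‖y‖ := by positivity
    nlinarith [Finset.sum_nonneg (fun j (_ : j ∈ s) => sq_nonneg ‖W j x‖),
      Finset.sum_nonneg (fun j (_ : j ∈ s) => sq_nonneg ‖W j y‖)]
  have hbound : ∀ x y : H, ‖∑' j, ⟪W j x, A (W j y)⟫_ℂ‖ ≤ ‖A‖ * ‖Y‖ * ‖x‖ * ‖y‖ := by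
    intro x y
    calc ‖∑' j, ⟪W j x, A (W j y)⟫_ℂ‖ ≤ ∑' j, ‖⟪W j x, A (W j y)⟫_ℂ‖ :=
          norm_tsum_le_tsum_norm (habs x y)
      _ ≤ ∑' j, ‖A‖ * (‖W j x‖ * ‖W j y‖) :=
          Summable.tsum_le_tsum (hterm x y) (habs x y) ((hprod x y).mul_left _)
      _ = ‖A‖ * ∑' j, ‖W j x‖ * ‖W j y‖ := tsum_mul_left
      _ ≤ ‖A‖ * (‖Y‖ * ‖x‖ * ‖y‖) := by
          have := hCS x y; gcongr
      _ = ‖A‖ * ‖Y‖ * ‖x‖ * ‖y‖ := by ring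
  -- the sesquilinear form
  set B : H → H → ℂ := fun x y => ∑' j, ⟪W j x, A (W j y)⟫_ℂ with hBdef
  have hBadd_right : ∀ x y y' : H, B x (y + y') = B x y + B x y' := by
    intro x y y'
    simp only [hBdef, map_add, inner_add_right]
    exact Summable.tsum_add (hsum x y) (hsum x y')
  have hBsmul_right : ∀ (c : ℂ) (x y : H), B x (c • y) = c * B x y := by
    intro c x y
    simp only [hBdef, map_smul, inner_smul_right]
    exact tsum_mul_left
  have hBadd_left : ∀ x x' y : H, B (x + x') y = B x y + B x' y := by
    intro x x' y
    simp only [hBdef, map_add, inner_add_left]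
    exact Summable.tsum_add (hsum x y) (hsum x' y)
  have hBsmul_left : ∀ (c : ℂ) (x y : H), B (c • x) y = (starRingEnd ℂ) c * B x y := by
    intro c x y
    simp only [hBdef, map_smul, inner_smul_left]
    exact tsum_mul_left
  -- functional F y : x ↦ conj (B x y)
  have hF : ∀ y : H, ∃ F : H →L[ℂ] ℂ, (∀ x, F x = (starRingEnd ℂ) (B x y)) ∧
      ‖F‖ ≤ ‖A‖ * ‖Y‖ * ‖y‖ := by
    intro y
    refine ⟨LinearMap.mkContinuous
      { toFun := fun x => (starRingEnd ℂ) (B x y)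
        map_add' := fun x x' => by
          show (starRingEnd ℂ) (B (x + x') y)
            = (starRingEnd ℂ) (B x y) + (starRingEnd ℂ) (B x' y)
          rw [hBadd_left]; simp
        map_smul' := fun c x => by
          show (starRingEnd ℂ) (B (c • x) y) = c • (starRingEnd ℂ) (B x y)
          rw [hBsmul_left]; simp [smul_eq_mul] } (‖A‖ * ‖Y‖ * ‖y‖)
      (fun x => ?_), fun x => rfl, ?_⟩
    · simp only [LinearMap.coe_mk, AddHom.coe_mk]
      rw [RCLike.norm_conj]
      calc ‖B x y‖ ≤ ‖A‖ * ‖Y‖ * ‖x‖ * ‖y‖ := hbound x y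
        _ = ‖A‖ * ‖Y‖ * ‖y‖ * ‖x‖ := by ring
    · exact LinearMap.mkContinuous_norm_le _ (by positivity) _
  choose F hFapp hFnorm using hF
  set z : H → H := fun y => (InnerProductSpace.toDual ℂ H).symm (F y) with hzdef
  have hz : ∀ x y : H, ⟪x, z y⟫_ℂ = B x y := by
    intro x y
    have h1 : ⟪z y, x⟫_ℂ = F y x := InnerProductSpace.toDual_symm_apply
    rw [← inner_conj_symm, h1, hFapp]
    simp
  have hznorm : ∀ y : H, ‖z y‖ ≤ ‖A‖ * ‖Y‖ * ‖y‖ := by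
    intro y
    rw [hzdef]
    simpa using hFnorm y
  have hzadd : ∀ y y' : H, z (y + y') = z y + z y' := by
    intro y y'
    refine ext_inner_left ℂ (fun x => ?_)
    rw [hz, inner_add_right, hz, hz, hBadd_right]
  have hzsmul : ∀ (c : ℂ) (y : H), z (c • y) = c • z y := by
    intro c y
    refine ext_inner_left ℂ (fun x => ?_)
    rw [hz, inner_smul_right, hz, hBsmul_right]
  set T : H →ₗ[ℂ] H :=
    { toFun := z, map_add' := hzadd, map_smul' := hzsmul } with hTdef
  refine ⟨T.mkContinuous (‖A‖ * ‖Y‖) (fun y => by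
    exact hznorm y), fun x y => ?_, ?_⟩
  · simp only [ContinuousLinearMap.comp_apply,
      ContinuousLinearMap.adjoint_inner_right]
    convert (hsum x y).hasSum using 1
    exact hz x y
  · exact T.mkContinuous_norm_le (by positivity) _
end

section
/- The subspace {A ρ_τ : A ∈ B(H)} is dense in the Hilbert space S_τ = {λ ∈ S₁ : λρ_τ^{-1/2} ∈ S₂} with inner product ⟨λ,μ⟩_{st,τ} = Tr(λ* μ ρ_τ^{-1}). -/
open scoped InnerProductSpace

section Stmt6Aux
set_option linter.unusedSectionVars false

variable {H : Type*} [NormedAddCommGroup H] [InnerProductSpace ℂ H] [CompleteSpace H]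

lemma parseval_sq (e : HilbertBasis ℕ ℂ H) (x : H) :
    HasSum (fun i => ‖⟪e i, x⟫_ℂ‖ ^ 2) (‖x‖ ^ 2) := by
  have h := e.hasSum_inner_mul_inner x x
  have h2 : HasSum (fun i => ((‖⟪e i, x⟫_ℂ‖ ^ 2 : ℝ) : ℂ)) ((‖x‖ ^ 2 : ℝ) : ℂ) := by
    convert h using 2 with i
    · rfl
    · rw [← inner_conj_symm x (e i), Complex.conj_mul', Complex.ofReal_pow]
    · rw [inner_self_eq_norm_sq_to_K]; exact_mod_cast rfl
  have h3 := h2.mapL Complex.reCLM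
  simp only [Complex.reCLM_apply, Complex.ofReal_re] at h3
  exact h3

/-- ENNReal Parseval -/
lemma parseval_ennreal (e : HilbertBasis ℕ ℂ H) (x : H) :
    ((‖x‖₊ : ENNReal)) ^ 2 = ∑' i, ((‖⟪e i, x⟫_ℂ‖₊ : ENNReal)) ^ 2 := by
  have h := parseval_sq e x
  have := ENNReal.ofReal_tsum_of_nonneg (fun i => by positivity) h.summable
  rw [h.tsum_eq] at this
  calc ((‖x‖₊ : ENNReal)) ^ 2 = ENNReal.ofReal (‖x‖ ^ 2) := by
        rw [ENNReal.ofReal_pow (norm_nonneg _), ofReal_norm, enorm_eq_nnnorm]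
    _ = ∑' i, ENNReal.ofReal (‖⟪e i, x⟫_ℂ‖ ^ 2) := this
    _ = ∑' i, ((‖⟪e i, x⟫_ℂ‖₊ : ENNReal)) ^ 2 := by
        congr 1; ext i; rw [ENNReal.ofReal_pow (norm_nonneg _), ofReal_norm, enorm_eq_nnnorm]

/-- HS sum is invariant under adjoint -/
lemma hs_adjoint (e : HilbertBasis ℕ ℂ H) (T : H →L[ℂ] H) :
    (∑' i, ((‖T (e i)‖₊ : ENNReal)) ^ 2)
      = ∑' i, ((‖(ContinuousLinearMap.adjoint T) (e i)‖₊ : ENNReal)) ^ 2 := by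
  have key : ∀ S : H →L[ℂ] H, (∑' i, ((‖S (e i)‖₊ : ENNReal)) ^ 2)
      = ∑' i, ∑' j, ((‖⟪e j, S (e i)⟫_ℂ‖₊ : ENNReal)) ^ 2 := by
    intro S
    exact tsum_congr fun i => parseval_ennreal e (S (e i))
  rw [key, key, ENNReal.tsum_comm]
  congr 1; ext i; congr 1; ext j
  congr 2
  have : ⟪e i, T (e j)⟫_ℂ = ⟪(ContinuousLinearMap.adjoint T) (e i), e j⟫_ℂ :=
    (ContinuousLinearMap.adjoint_inner_left T (e j) (e i)).symm
  rw [← nnnorm_norm, ← nnnorm_norm (⟪e j, _⟫_ℂ), this, norm_inner_symm]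

/-- dense range of a self-adjoint injective operator -/
lemma dense_range_rho (ρhalf : H →L[ℂ] H) (hsa : IsSelfAdjoint ρhalf)
    (hinj : Function.Injective ρhalf) (v : H) {δ : ℝ} (hδ : 0 < δ) :
    ∃ y : H, ‖v - ρhalf y‖ < δ := by
  set K : Submodule ℂ H := LinearMap.range (ρhalf : H →ₗ[ℂ] H) with hK
  have horth : Kᗮ = ⊥ := by
    rw [Submodule.eq_bot_iff]
    intro z hz
    have hz' : ∀ x : H, ⟪ρhalf x, z⟫_ℂ = 0 := fun x =>
      (Submodule.mem_orthogonal K z).mp hz _ ⟨x, rfl⟩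
    have hρz : ρhalf z = 0 := by
      have h1 : ⟪ρhalf z, ρhalf z⟫_ℂ = 0 := by
        have h2 := ContinuousLinearMap.adjoint_inner_left ρhalf z (ρhalf z)
        rw [hsa.adjoint_eq] at h2
        rw [← h2]; exact hz' (ρhalf z)
      exact inner_self_eq_zero.mp h1
    exact hinj (by simpa using hρz)
  have hcl : K.topologicalClosure = ⊤ := Submodule.topologicalClosure_eq_top_iff.mpr horth
  have hv : v ∈ closure (K : Set H) := by
    have : v ∈ K.topologicalClosure := hcl ▸ Submodule.mem_top
    exact this
  rcases Metric.mem_closure_iff.mp hv δ hδ with ⟨w, hwK, hw⟩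
  rcases hwK with ⟨y, rfl⟩
  exact ⟨y, by rwa [dist_eq_norm] at hw⟩

lemma ofReal_tsum_sq (f : ℕ → H) (hf : Summable fun i => ‖f i‖ ^ 2) :
    ENNReal.ofReal (∑' i, ‖f i‖ ^ 2) = ∑' i, ((‖f i‖₊ : ENNReal)) ^ 2 := by
  rw [ENNReal.ofReal_tsum_of_nonneg (fun i => by positivity) hf]
  exact tsum_congr fun i => by
    rw [ENNReal.ofReal_pow (norm_nonneg _), ofReal_norm, enorm_eq_nnnorm]

lemma summable_sq_of_ne_top (f : ℕ → H)
    (hf : (∑' i, ((‖f i‖₊ : ENNReal)) ^ 2) ≠ ⊤) : Summable fun i => ‖f i‖ ^ 2 := by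
  have h1 : (∑' i, ((‖f i‖₊ ^ 2 : NNReal) : ENNReal)) ≠ ⊤ := by
    simp_rw [ENNReal.coe_pow]; exact hf
  have h2 := ENNReal.tsum_coe_ne_top_iff_summable.mp h1
  have h3 := NNReal.summable_coe.mpr h2
  exact h3.congr fun i => by push_cast; ring


end Stmt6Aux

/-- The subspace `{A ρ : A ∈ B(H)}` is dense in the Hilbert space
`S_τ = {lam ∈ S₁ : lam ρ^{-1/2} ∈ S₂}` with inner product
`⟨lam,mu⟩_{st,τ} = Tr((lam ρ^{-1/2})* (mu ρ^{-1/2}))`.  Identifying `lam = κ ∘ ρ^{1/2}`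
with its Hilbert–Schmidt part `κ = lam ρ^{-1/2}` (an isometry onto `S₂`), density means:
for every Hilbert–Schmidt `κ` and `ε > 0` there is a bounded `A` with
`‖κ - A ρ^{1/2}‖_{S₂}² < ε` (note `(A ∘ ρ) ρ^{-1/2} = A ∘ ρ^{1/2}`). -/
theorem stmt6
    {H : Type*} [NormedAddCommGroup H] [InnerProductSpace ℂ H] [CompleteSpace H]
    (e : HilbertBasis ℕ ℂ H) (ρhalf : H →L[ℂ] H)
    (hpos : ρhalf.IsPositive) (hinj : Function.Injective ρhalf)
    (htrρ : Summable fun i => (⟪e i, (ρhalf ∘L ρhalf) (e i)⟫_ℂ).re) :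
    ∀ κ : H →L[ℂ] H, (Summable fun i => ‖κ (e i)‖ ^ 2) →
      ∀ ε : ℝ, 0 < ε →
        ∃ A : H →L[ℂ] H, (∑' i, ‖(κ - A ∘L ρhalf) (e i)‖ ^ 2) < ε := by
  intro κ hκ ε hε
  set κs := ContinuousLinearMap.adjoint κ with hκsdef
  -- the adjoint's HS sum is finite
  have hEκs_fin : (∑' i, ((‖κs (e i)‖₊ : ENNReal)) ^ 2) ≠ ⊤ := by
    rw [hκsdef, ← hs_adjoint e κ, ← ofReal_tsum_sq _ hκ]
    exact ENNReal.ofReal_ne_top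
  have hκs_summ : Summable (fun i => ‖κs (e i)‖ ^ 2) :=
    summable_sq_of_ne_top _ hEκs_fin
  -- choose N with small tail
  obtain ⟨N, hN⟩ : ∃ N : ℕ, (∑' i : ℕ, ‖κs (e (i + N))‖ ^ 2) < ε / 2 :=
    ((tendsto_sum_nat_add fun i => ‖κs (e i)‖ ^ 2).eventually
      (gt_mem_nhds (by linarith : (0:ℝ) < ε / 2))).exists
  set c : ℝ := ε / (2 * (N + 1)) with hcdef
  have hc : 0 < c := by positivity
  -- choose approximations in the range of ρhalf
  have hy : ∀ i : ℕ, ∃ y : H, ‖κs (e i) - ρhalf y‖ ^ 2 < c := by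
    intro i
    obtain ⟨y, hy⟩ := dense_range_rho ρhalf hpos.isSelfAdjoint hinj (κs (e i))
      (Real.sqrt_pos.mpr hc)
    exact ⟨y, (Real.lt_sqrt (norm_nonneg _)).mp hy⟩
  choose y hy using hy
  -- the finite-rank operator
  set B : H →L[ℂ] H := ∑ i ∈ Finset.range N, (innerSL ℂ (e i)).smulRight (y i) with hBdef
  have hB : ∀ j : ℕ, B (e j) = if j < N then y j else 0 := by
    intro j
    rw [hBdef, ContinuousLinearMap.sum_apply]
    have horth := orthonormal_iff_ite.mp e.orthonormal
    calc (∑ i ∈ Finset.range N, ((innerSL ℂ (e i)).smulRight (y i)) (e j))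
        = ∑ i ∈ Finset.range N, if i = j then y i else 0 := by
          refine Finset.sum_congr rfl fun i _ => ?_
          rw [ContinuousLinearMap.smulRight_apply, innerSL_apply_apply, horth]
          split <;> simp
      _ = if j ∈ Finset.range N then y j else 0 := Finset.sum_ite_eq' _ _ _
      _ = if j < N then y j else 0 := by simp [Finset.mem_range]
  refine ⟨ContinuousLinearMap.adjoint B, ?_⟩
  set T : H →L[ℂ] H := κ - ContinuousLinearMap.adjoint B ∘L ρhalf with hTdef
  have hTadj : ContinuousLinearMap.adjoint T = κs - ρhalf ∘L B := by
    rw [hTdef, map_sub, ContinuousLinearMap.adjoint_comp,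
      ContinuousLinearMap.adjoint_adjoint, hpos.isSelfAdjoint.adjoint_eq, hκsdef]
  set h : ℕ → ℝ := fun i => ‖(κs - ρhalf ∘L B) (e i)‖ ^ 2 with hhdef
  have hhead : ∀ i < N, h i < c := by
    intro i hi
    have : (κs - ρhalf ∘L B) (e i) = κs (e i) - ρhalf (y i) := by
      simp [ContinuousLinearMap.sub_apply, hB i, if_pos hi]
    rw [hhdef]; simpa [this] using hy i
  have htail_eq : ∀ i : ℕ, h (i + N) = ‖κs (e (i + N))‖ ^ 2 := by
    intro i
    have : (κs - ρhalf ∘L B) (e (i + N)) = κs (e (i + N)) := by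
      simp [ContinuousLinearMap.sub_apply, hB (i + N), Nat.not_lt.mpr (Nat.le_add_left N i)]
    rw [hhdef]; simp [this]
  have hsummh : Summable h := by
    refine (summable_nat_add_iff N).mp ?_
    exact (((summable_nat_add_iff N).mpr hκs_summ).congr fun i => (htail_eq i).symm)
  have hsum_lt : (∑' i, h i) < ε := by
    rw [← Summable.sum_add_tsum_nat_add N hsummh]
    have h1 : (∑ i ∈ Finset.range N, h i) ≤ N * c := by
      calc (∑ i ∈ Finset.range N, h i) ≤ ∑ i ∈ Finset.range N, c :=
            Finset.sum_le_sum fun i hi => (hhead i (Finset.mem_range.mp hi)).le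
        _ = N * c := by rw [Finset.sum_const, Finset.card_range]; ring
    have h2 : (N : ℝ) * c < ε / 2 := by
      have hcN : c * (2 * (N + 1)) = ε := by
        rw [hcdef]; field_simp
      nlinarith [hc]
    have h3 : (∑' i : ℕ, h (i + N)) < ε / 2 := by
      rw [tsum_congr htail_eq]; exact hN
    linarith
  -- transfer to T via the adjoint invariance of the HS sum
  have hET : (∑' i, ((‖T (e i)‖₊ : ENNReal)) ^ 2) = ENNReal.ofReal (∑' i, h i) := by
    rw [hs_adjoint e T, hTadj, ofReal_tsum_sq _ hsummh]
  have hTsumm : Summable fun i => ‖T (e i)‖ ^ 2 :=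
    summable_sq_of_ne_top _ (by rw [hET]; exact ENNReal.ofReal_ne_top)
  have hfinal : (∑' i, ‖T (e i)‖ ^ 2) = ∑' i, h i := by
    have := ofReal_tsum_sq (fun i => T (e i)) hTsumm
    rw [hET] at this
    exact (ENNReal.ofReal_eq_ofReal_iff (tsum_nonneg fun i => by positivity) (tsum_nonneg fun i => by positivity)).mp this
  rw [← hTdef, hfinal] at *
  exact hsum_lt
end

section
/- Let L₀ be skew-adjoint generating the unitary group e^{L₀t}, and G bounded self-adjoint with G ≤ 0, such that e^{L₀t} G = G e^{L₀t} for all t. Then for β_t = e^{L₀t} e^{Gt}, the time averages (1/T)∫₀^T β_t dt converge strongly as T → ∞ to the orthogonal projection onto Null(L₀) ∩ Null(G). -/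
open scoped InnerProductSpace

private lemma quad_coeff_zero' {a b : ℝ} (ha : 0 ≤ a) (hb : 0 ≤ b)
    (h : ∀ t : ℝ, 0 ≤ a * t ^ 2 + b * t) : b = 0 := by
  have h2 : 0 < a + 1 := by linarith
  have h1 := h (-(b / (a + 1)))
  have he : a * (-(b / (a + 1))) ^ 2 + b * (-(b / (a + 1)))
      = -(b ^ 2 * (1 / (a+1)) * (1/(a+1))) := by
    field_simp
    ring
  rw [he] at h1
  rcases eq_or_lt_of_le hb with h4 | h4
  · exact h4.symm
  · have : 0 < b ^ 2 * (1 / (a+1)) * (1/(a+1)) := by positivity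
    linarith

private lemma cre_norm' {H : Type*} [NormedAddCommGroup H] [InnerProductSpace ℂ H] (x : H) :
    (⟪x, x⟫_ℂ).re = ‖x‖ ^ 2 := by
  rw [← RCLike.re_to_complex]; exact inner_self_eq_norm_sq _

section aux
variable {H : Type*} [NormedAddCommGroup H] [InnerProductSpace ℂ H] [CompleteSpace H]

private lemma aux_pos_apply_zero' (T : H →L[ℂ] H) (hsa : IsSelfAdjoint T)
    (hpos : ∀ z : H, 0 ≤ (⟪z, T z⟫_ℂ).re) {z : H} (hz : (⟪z, T z⟫_ℂ).re = 0) : T z = 0 := by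
  have hsymm : ∀ u v : H, ⟪T u, v⟫_ℂ = ⟪u, T v⟫_ℂ :=
    fun u v => ContinuousLinearMap.isSelfAdjoint_iff_isSymmetric.mp hsa u v
  have key : ∀ t : ℝ, 0 ≤ (⟪T z, T (T z)⟫_ℂ).re * t ^ 2 + (2 * ‖T z‖ ^ 2) * t := by
    intro t
    have h0 := hpos (z + (t : ℂ) • T z)
    have hexp : ⟪z + (t:ℂ)•T z, T (z + (t:ℂ)•T z)⟫_ℂ
        = ⟪z, T z⟫_ℂ + (t:ℂ) * ⟪z, T (T z)⟫_ℂ + (t:ℂ) * ⟪T z, T z⟫_ℂ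
          + ((t*t : ℝ) : ℂ) * ⟪T z, T (T z)⟫_ℂ := by
      simp only [map_add, map_smul, inner_add_left, inner_add_right, inner_smul_left,
        inner_smul_right, Complex.conj_ofReal, Complex.ofReal_mul]
      ring
    have hri : (⟪z, T (T z)⟫_ℂ).re = (⟪T z, T z⟫_ℂ).re := by
      rw [← hsymm z (T z)]
    have hn : (⟪T z, T z⟫_ℂ).re = ‖T z‖ ^ 2 := cre_norm' _
    have hre : (⟪z + (t:ℂ)•T z, T (z + (t:ℂ)•T z)⟫_ℂ).re
        = (⟪T z, T (T z)⟫_ℂ).re * t ^ 2 + (2 * ‖T z‖^2) * t := by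
      rw [hexp]
      simp only [Complex.add_re, Complex.mul_re, Complex.ofReal_re, Complex.ofReal_im, hz,
        hri, hn]
      ring
    rw [hre] at h0
    exact h0
  have hb : ‖T z‖ ^ 2 = 0 := by
    have := quad_coeff_zero' (hpos (T z)) (by positivity) key
    nlinarith
  have : ‖T z‖ = 0 := by nlinarith [norm_nonneg (T z)]
  simpa using this

private lemma exp_deriv_apply' (G : H →L[ℂ] H) (x : H) (s : ℝ) :
    HasDerivAt (fun u : ℝ => NormedSpace.exp (u • G) x) (NormedSpace.exp (s • G) (G x)) s := by
  have hc := hasDerivAt_exp_smul_const (𝕂 := ℝ) G s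
  have hev := ((ContinuousLinearMap.apply ℂ H x).restrictScalars ℝ).hasFDerivAt.comp_hasDerivAt s hc
  exact hev

private lemma exp_comm_apply' (G : H →L[ℂ] H) (x : H) (s : ℝ) :
    NormedSpace.exp (s • G) (G x) = G (NormedSpace.exp (s • G) x) := by
  have h : Commute (NormedSpace.exp (s • G)) G := ((Commute.refl G).smul_left s).exp_left
  calc NormedSpace.exp (s • G) (G x) = (NormedSpace.exp (s • G) * G) x := rfl
    _ = (G * NormedSpace.exp (s • G)) x := by rw [h.eq]
    _ = G (NormedSpace.exp (s • G) x) := rfl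

private lemma nsq_deriv' (G : H →L[ℂ] H) (x : H) (s : ℝ) :
    HasDerivAt (fun u : ℝ => (⟪NormedSpace.exp (u • G) x, NormedSpace.exp (u • G) x⟫_ℂ).re)
      (2 * (⟪NormedSpace.exp (s • G) x, G (NormedSpace.exp (s • G) x)⟫_ℂ).re) s := by
  have h1 := (exp_deriv_apply' G x s).inner ℂ (exp_deriv_apply' G x s)
  have h2 := Complex.reCLM.hasFDerivAt.comp_hasDerivAt s h1
  have he : (Complex.reCLM (⟪NormedSpace.exp (s • G) x, NormedSpace.exp (s • G) (G x)⟫_ℂ +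
      ⟪NormedSpace.exp (s • G) (G x), NormedSpace.exp (s • G) x⟫_ℂ))
      = 2 * (⟪NormedSpace.exp (s • G) x, G (NormedSpace.exp (s • G) x)⟫_ℂ).re := by
    simp only [Complex.reCLM_apply, Complex.add_re]
    rw [show ⟪NormedSpace.exp (s • G) (G x), NormedSpace.exp (s • G) x⟫_ℂ
        = (starRingEnd ℂ) ⟪NormedSpace.exp (s • G) x, NormedSpace.exp (s • G) (G x)⟫_ℂ from
      (inner_conj_symm _ _).symm, Complex.conj_re, ← exp_comm_apply']
    ring
  rw [he] at h2
  exact h2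

private lemma exp_contraction' {G : H →L[ℂ] H} (hGneg : ∀ x : H, (⟪x, G x⟫_ℂ).re ≤ 0)
    (x : H) {t : ℝ} (ht : 0 ≤ t) : ‖NormedSpace.exp (t • G) x‖ ≤ ‖x‖ := by
  set f := fun u : ℝ => (⟪NormedSpace.exp (u • G) x, NormedSpace.exp (u • G) x⟫_ℂ).re with hf
  have hanti : Antitone f := by
    apply antitone_of_deriv_nonpos
    · exact fun s => (nsq_deriv' G x s).differentiableAt
    · intro s
      rw [(nsq_deriv' G x s).deriv]
      have := hGneg (NormedSpace.exp (s • G) x)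
      linarith
  have h0 : f 0 = ‖x‖ ^ 2 := by
    simp only [hf, zero_smul, NormedSpace.exp_zero, ContinuousLinearMap.one_apply]
    exact cre_norm' x
  have ht2 : f t = ‖NormedSpace.exp (t • G) x‖ ^ 2 := cre_norm' _
  have := hanti ht
  rw [h0, ht2] at this
  nlinarith [norm_nonneg (NormedSpace.exp (t • G) x), norm_nonneg x]

private lemma exp_fixed_of_ker' {G : H →L[ℂ] H} {x : H} (hGx : G x = 0) (s : ℝ) :
    NormedSpace.exp (s • G) x = x := by
  have hd : ∀ u : ℝ, HasDerivAt (fun u : ℝ => NormedSpace.exp (u • G) x) 0 u := fun u => by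
    simpa [hGx] using exp_deriv_apply' G x u
  have hconst := is_const_of_deriv_eq_zero (fun u => (hd u).differentiableAt)
    (fun u => (hd u).deriv) s 0
  simpa [zero_smul, NormedSpace.exp_zero] using hconst

private lemma ker_of_norm_const' {G : H →L[ℂ] H} (hGsa : IsSelfAdjoint G)
    (hGneg : ∀ x : H, (⟪x, G x⟫_ℂ).re ≤ 0) {x : H}
    (h : ∀ s : ℝ, 0 ≤ s → ‖NormedSpace.exp (s • G) x‖ = ‖x‖) : G x = 0 := by
  set f := fun u : ℝ => (⟪NormedSpace.exp (u • G) x, NormedSpace.exp (u • G) x⟫_ℂ).re with hf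
  have h1 : HasDerivWithinAt f (2 * (⟪x, G x⟫_ℂ).re) (Set.Ici (0:ℝ)) 0 := by
    have := (nsq_deriv' G x 0).hasDerivWithinAt (s := Set.Ici (0:ℝ))
    simpa only [zero_smul, NormedSpace.exp_zero, ContinuousLinearMap.one_apply] using this
  have h2 : HasDerivWithinAt f 0 (Set.Ici (0:ℝ)) 0 := by
    apply (hasDerivWithinAt_const (0:ℝ) (Set.Ici (0:ℝ)) (‖x‖^2)).congr
    · intro y hy
      show (⟪NormedSpace.exp (y • G) x, NormedSpace.exp (y • G) x⟫_ℂ).re = ‖x‖^2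
      rw [cre_norm', h y hy]
    · show (⟪NormedSpace.exp ((0:ℝ) • G) x, NormedSpace.exp ((0:ℝ) • G) x⟫_ℂ).re = ‖x‖^2
      rw [cre_norm', h 0 le_rfl]
  have heq : 2 * (⟪x, G x⟫_ℂ).re = 0 :=
    (uniqueDiffOn_Ici (0:ℝ) 0 Set.self_mem_Ici).eq_deriv _ h1 h2
  have hzero : (⟪x, (-G) x⟫_ℂ).re = 0 := by
    simp only [ContinuousLinearMap.neg_apply, inner_neg_right, Complex.neg_re]
    linarith
  have := aux_pos_apply_zero' (-G) hGsa.neg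
    (fun z => by simp only [ContinuousLinearMap.neg_apply, inner_neg_right, Complex.neg_re]
                 linarith [hGneg z]) hzero
  simpa [neg_eq_zero] using this

end aux

set_option maxHeartbeats 1000000 in
/-- Let `L₀` be skew-adjoint generating the strongly continuous unitary
group `U t = e^{L₀ t}` (encoded via Stone's theorem), and let `G` be a bounded
self-adjoint operator with `G ≤ 0` commuting with the group: `U t ∘ G = G ∘ U t`.
Then for `β_t = U t ∘ e^{tG}`, the time averages `(1/T)∫₀^T β_t dt` converge strongly
as `T → ∞` to the orthogonal projection onto `Null(L₀) ∩ Null(G)`: there is a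
self-adjoint idempotent `P` whose fixed points are exactly the vectors `x` with
`U t x = x` for all `t` (i.e. `x ∈ Null(L₀)`) and `G x = 0`, such that for every `x`,
`(1/T)∫₀^T U t (e^{tG} x) dt → P x`. -/
theorem stmt11
    {H : Type*} [NormedAddCommGroup H] [InnerProductSpace ℂ H] [CompleteSpace H]
    (U : ℝ → H →L[ℂ] H)
    (hgrp : ∀ s t : ℝ, U (s + t) = U s ∘L U t) (h0 : U 0 = 1)
    (hunit : ∀ t : ℝ, (U t).adjoint ∘L U t = 1 ∧ U t ∘L (U t).adjoint = 1)
    (hcont : ∀ x : H, Continuous fun t : ℝ => U t x)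
    (G : H →L[ℂ] H) (hGsa : IsSelfAdjoint G)
    (hGneg : ∀ x : H, (⟪x, G x⟫_ℂ).re ≤ 0)
    (hcomm : ∀ t : ℝ, U t ∘L G = G ∘L U t) :
    ∃ P : H →L[ℂ] H,
      IsSelfAdjoint P ∧ P ∘L P = P ∧
      (∀ x : H, P x = x ↔ ((∀ t : ℝ, U t x = x) ∧ G x = 0)) ∧
      ∀ x : H,
        Filter.Tendsto
          (fun T : ℝ => (1 / T) • ∫ t in (0:ℝ)..T, U t ((NormedSpace.exp (t • G)) x))
          Filter.atTop (nhds (P x)) := by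
  -- switch to the real exponential
  have hexpR : ∀ t : ℝ, NormedSpace.exp (t • G) = NormedSpace.exp (t • G) := by
    intro t; rfl
  set E : ℝ → H →L[ℂ] H := fun t => NormedSpace.exp (t • G) with hE
  -- basic unitary group facts
  have hUinv : ∀ t : ℝ, U t ∘L U (-t) = 1 := by
    intro t; rw [← hgrp]; simpa using h0
  have hUnorm : ∀ (t : ℝ) (z : H), ‖U t z‖ = ‖z‖ := by
    intro t z
    have h1 : ⟪U t z, U t z⟫_ℂ = ⟪z, z⟫_ℂ := by
      rw [← ContinuousLinearMap.adjoint_inner_left]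
      congr 1
      calc (U t).adjoint (U t z) = ((U t).adjoint ∘L U t) z := rfl
        _ = z := by rw [(hunit t).1]; rfl
    have h2 := congrArg Complex.re h1
    rw [cre_norm', cre_norm'] at h2
    nlinarith [norm_nonneg (U t z), norm_nonneg z]
  have hUadj : ∀ t : ℝ, (U t).adjoint = U (-t) := by
    intro t
    calc (U t).adjoint = (U t).adjoint ∘L (U t ∘L U (-t)) := by rw [hUinv]; rfl
      _ = ((U t).adjoint ∘L U t) ∘L U (-t) := by rw [ContinuousLinearMap.comp_assoc]
      _ = U (-t) := by rw [(hunit t).1]; rfl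
  -- commutation
  have hcomm' : ∀ t : ℝ, Commute (U t) G := fun t => hcomm t
  have hUE : ∀ (t s : ℝ) (x : H), U t (E s x) = E s (U t x) := by
    intro t s x
    have h : Commute (U t) (NormedSpace.exp (s • G)) :=
      ((hcomm' t).smul_right s).exp_right
    calc U t (E s x) = (U t * E s) x := rfl
      _ = (E s * U t) x := by rw [h.eq]
      _ = E s (U t x) := rfl
  have hEadd : ∀ (t s : ℝ) (x : H), E t (E s x) = E (t + s) x := by
    intro t s x
    have h : E (t + s) = E t * E s := by
      rw [hE]
      show NormedSpace.exp ((t+s) • G) = _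
      letI : NormedAlgebra ℚ (H →L[ℂ] H) := NormedAlgebra.restrictScalars ℚ ℂ (H →L[ℂ] H); rw [add_smul, NormedSpace.exp_add_of_commute (((Commute.refl G).smul_left t).smul_right s)]
    rw [h]; rfl
  have hEsa : ∀ s : ℝ, IsSelfAdjoint (E s) := by
    intro s
    rw [IsSelfAdjoint, hE]
    show star (NormedSpace.exp (s • G)) = _
    rw [NormedSpace.star_exp, star_smul, star_trivial, hGsa.star_eq]
  -- the fixed subspace K
  let K : Submodule ℂ H :=
    { carrier := {x : H | (∀ t : ℝ, U t x = x) ∧ G x = 0}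
      add_mem' := by
        rintro a b ⟨ha1, ha2⟩ ⟨hb1, hb2⟩
        exact ⟨fun t => by rw [map_add, ha1 t, hb1 t], by rw [map_add, ha2, hb2, add_zero]⟩
      zero_mem' := ⟨fun t => map_zero _, map_zero _⟩
      smul_mem' := by
        rintro c a ⟨ha1, ha2⟩
        exact ⟨fun t => by rw [map_smul, ha1 t], by rw [map_smul, ha2, smul_zero]⟩ }
  have hKmem : ∀ x : H, x ∈ K ↔ ((∀ t : ℝ, U t x = x) ∧ G x = 0) := fun x => Iff.rfl
  have hKclosed : IsClosed (K : Set H) := by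
    have : (K : Set H) = (⋂ t : ℝ, {x : H | U t x = x}) ∩ {x : H | G x = 0} := by
      ext x
      simp only [Set.mem_inter_iff, Set.mem_iInter, Set.mem_setOf_eq]
      rfl
    rw [this]
    exact IsClosed.inter
      (isClosed_iInter fun t => isClosed_eq ((U t).continuous) continuous_id)
      (isClosed_eq G.continuous continuous_const)
  have : CompleteSpace K := hKclosed.completeSpace_coe
  -- the candidate projection
  set P : H →L[ℂ] H := K.subtypeL ∘L K.orthogonalProjectionOnto with hP
  have hPapply : ∀ x : H, P x = (K.orthogonalProjectionOnto x : H) := fun x => rfl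
  have hPfix : ∀ x : H, P x = x ↔ x ∈ K := by
    intro x
    rw [hPapply]
    exact Submodule.starProjection_eq_self_iff
  -- continuity of the integrand
  have hEcont : ∀ x : H, Continuous fun t : ℝ => E t x := by
    intro x
    have h1 : Continuous fun t : ℝ => NormedSpace.exp (t • G) :=
      by letI : NormedAlgebra ℚ (H →L[ℂ] H) := NormedAlgebra.restrictScalars ℚ ℂ (H →L[ℂ] H); exact NormedSpace.exp_continuous.comp (continuous_id.smul continuous_const)
    exact h1.clm_apply continuous_const
  have hInt : ∀ x : H, Continuous fun t : ℝ => U t (E t x) := by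
    intro x
    rw [continuous_iff_continuousAt]
    intro t₀
    have g1 : Filter.Tendsto (fun t : ℝ => U t (E t₀ x)) (nhds t₀) (nhds (U t₀ (E t₀ x))) :=
      (hcont (E t₀ x)).tendsto t₀
    have g2 : Filter.Tendsto (fun t : ℝ => U t (E t x) - U t (E t₀ x)) (nhds t₀) (nhds 0) := by
      have hb : ∀ t : ℝ, ‖U t (E t x) - U t (E t₀ x)‖ ≤ ‖E t x - E t₀ x‖ := fun t => by
        rw [← map_sub, hUnorm]
      have hc2 : Filter.Tendsto (fun t : ℝ => ‖E t x - E t₀ x‖) (nhds t₀) (nhds 0) := by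
        have h := (((hEcont x).sub (continuous_const : Continuous fun _ : ℝ => E t₀ x)).norm).tendsto t₀
        simpa using h
      exact squeeze_zero_norm hb hc2
    have := g2.add g1
    rw [zero_add] at this
    apply this.congr
    intro t
    abel
  have hIntble : ∀ (x : H) (a b : ℝ), IntervalIntegrable (fun t : ℝ => U t (E t x))
      MeasureTheory.volume a b := fun x a b => (hInt x).intervalIntegrable a b
  -- the averaging operator
  set A : ℝ → H → H := fun T z => (1 / T) • ∫ t in (0:ℝ)..T, U t (E t z) with hA
  -- contraction property of β for t ≥ 0
  have hβnorm : ∀ (t : ℝ), 0 ≤ t → ∀ z : H, ‖U t (E t z)‖ ≤ ‖z‖ := by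
    intro t ht z
    rw [hUnorm]
    exact exp_contraction' hGneg z ht
  -- bound on averages
  have hAbound : ∀ (T : ℝ), 0 < T → ∀ z : H, ‖A T z‖ ≤ ‖z‖ := by
    intro T hT z
    simp only [hA]
    rw [norm_smul]
    have hb : ‖∫ t in (0:ℝ)..T, U t (E t z)‖ ≤ ‖z‖ * |T - 0| := by
      apply intervalIntegral.norm_integral_le_of_norm_le_const
      intro t ht
      rw [Set.uIoc_of_le hT.le] at ht
      exact hβnorm t ht.1.le z
    calc ‖(1/T : ℝ)‖ * ‖∫ t in (0:ℝ)..T, U t (E t z)‖ ≤ ‖(1/T : ℝ)‖ * (‖z‖ * |T - 0|) := by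
          apply mul_le_mul_of_nonneg_left hb (norm_nonneg _)
      _ = ‖z‖ := by
          rw [Real.norm_eq_abs, abs_of_pos (by positivity), sub_zero, abs_of_pos hT]
          field_simp
  -- linearity of averages
  have hAadd : ∀ (T : ℝ) (z w : H), A T (z + w) = A T z + A T w := by
    intro T z w
    simp only [hA]
    rw [← smul_add, ← intervalIntegral.integral_add (hIntble z 0 T) (hIntble w 0 T)]
    congr 1
    apply intervalIntegral.integral_congr
    intro t _
    simp [map_add]
  have hAsub : ∀ (T : ℝ) (z w : H), A T (z - w) = A T z - A T w := by
    intro T z w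
    simp only [hA]
    rw [← smul_sub, ← intervalIntegral.integral_sub (hIntble z 0 T) (hIntble w 0 T)]
    congr 1
    apply intervalIntegral.integral_congr
    intro t _
    simp [map_sub]
  have hAsmul : ∀ (T : ℝ) (c : ℂ) (z : H), A T (c • z) = c • A T z := by
    intro T c z
    simp only [hA]
    rw [smul_comm]
    congr 1
    rw [← intervalIntegral.integral_smul]
    apply intervalIntegral.integral_congr
    intro t _
    simp [map_smul]
  -- the submodule of vectors whose averages tend to 0
  let M : Submodule ℂ H :=
    { carrier := {z : H | Filter.Tendsto (fun T : ℝ => A T z) Filter.atTop (nhds 0)}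
      add_mem' := by
        intro a b ha hb
        have := ha.add hb
        rw [add_zero] at this
        apply this.congr
        intro T
        rw [hAadd]
      zero_mem' := by
        have : ∀ T : ℝ, A T 0 = 0 := by
          intro T
          simp only [hA]
          have : ∀ t : ℝ, U t (E t (0 : H)) = 0 := fun t => by simp
          rw [intervalIntegral.integral_congr (g := fun _ => (0:H)) (fun t _ => this t)]
          simp
        simp only [Set.mem_setOf_eq, this]
        exact tendsto_const_nhds
      smul_mem' := by
        intro c a ha
        have := ha.const_smul c
        rw [smul_zero] at this
        apply this.congr
        intro T
        rw [hAsmul] }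
  have hMmem : ∀ z : H, z ∈ M ↔ Filter.Tendsto (fun T : ℝ => A T z) Filter.atTop (nhds 0) :=
    fun z => Iff.rfl
  have hMclosed : IsClosed (M : Set H) := by
    apply isClosed_of_closure_subset
    intro z hz
    show Filter.Tendsto (fun T : ℝ => A T z) Filter.atTop (nhds 0)
    rw [NormedAddCommGroup.tendsto_nhds_zero]
    intro ε hε
    obtain ⟨m, hmM, hmz⟩ := Metric.mem_closure_iff.mp hz (ε/2) (by linarith)
    rw [dist_eq_norm] at hmz
    have hm := (hMmem m).mp hmM
    rw [NormedAddCommGroup.tendsto_nhds_zero] at hm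
    filter_upwards [hm (ε/2) (by linarith), Filter.eventually_gt_atTop (0:ℝ)] with T h1 h2
    have he : A T z = A T m + A T (z - m) := by rw [hAsub]; abel
    have hbd : ‖A T (z - m)‖ ≤ ‖z - m‖ := hAbound T h2 _
    calc ‖A T z‖ ≤ ‖A T m‖ + ‖A T (z - m)‖ := by rw [he]; exact norm_add_le _ _
      _ < ε/2 + ε/2 := by
          apply add_lt_add_of_lt_of_le h1
          exact hbd.trans hmz.le
      _ = ε := by ring
  -- generators belong to M
  have hgen : ∀ (s : ℝ), 0 ≤ s → ∀ y : H, U s (E s y) - y ∈ M := by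
    intro s hs y
    show Filter.Tendsto (fun T : ℝ => A T (U s (E s y) - y)) Filter.atTop (nhds 0)
    have hsemi : ∀ t : ℝ, U t (E t (U s (E s y) - y)) = U (t+s) (E (t+s) y) - U t (E t y) := by
      intro t
      rw [map_sub, map_sub]
      congr 1
      calc U t (E t (U s (E s y)))
          = U t (U s (E t (E s y))) := by rw [(hUE s t (E s y)).symm]
        _ = U (t + s) (E t (E s y)) := by rw [hgrp t s]; rfl
        _ = U (t + s) (E (t+s) y) := by rw [hEadd t s y]
    have hshiftInt : ∀ a b : ℝ, IntervalIntegrable (fun t : ℝ => U (t+s) (E (t+s) y))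
        MeasureTheory.volume a b := by
      intro a b
      exact ((hInt y).comp (continuous_id.add continuous_const)).intervalIntegrable a b
    apply squeeze_zero_norm' (a := fun T : ℝ => (2 * ‖y‖ * s) / T)
    · filter_upwards [Filter.eventually_gt_atTop (0:ℝ)] with T hT
      have e1 : A T (U s (E s y) - y)
          = (1/T) • ((∫ t in T..(T+s), U t (E t y)) - ∫ t in (0:ℝ)..s, U t (E t y)) := by
        simp only [hA]
        congr 1
        have h1 : (∫ t in (0:ℝ)..T, U t (E t (U s (E s y) - y)))
            = (∫ t in (0:ℝ)..T, U (t+s) (E (t+s) y)) - ∫ t in (0:ℝ)..T, U t (E t y) := by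
          rw [← intervalIntegral.integral_sub (hshiftInt 0 T) (hIntble y 0 T)]
          apply intervalIntegral.integral_congr
          intro t _
          exact hsemi t
        have h2 : (∫ t in (0:ℝ)..T, U (t+s) (E (t+s) y))
            = ∫ t in s..(T+s), U t (E t y) := by
          have := intervalIntegral.integral_comp_add_right (a := (0:ℝ)) (b := T)
            (fun t => U t (E t y)) s
          simpa using this
        have h3 := intervalIntegral.integral_add_adjacent_intervals
          (hIntble y s T) (hIntble y T (T+s))
        have h4 := intervalIntegral.integral_add_adjacent_intervals
          (hIntble y 0 s) (hIntble y s T)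
        rw [h1, h2, ← h3, ← h4]
        abel
      have b1 : ‖∫ t in T..(T+s), U t (E t y)‖ ≤ ‖y‖ * s := by
        have hb := intervalIntegral.norm_integral_le_of_norm_le_const (C := ‖y‖)
          (a := T) (b := T+s) (f := fun t => U t (E t y)) ?_
        · calc ‖∫ t in T..(T+s), U t (E t y)‖ ≤ ‖y‖ * |T + s - T| := hb
            _ = ‖y‖ * s := by rw [add_sub_cancel_left, abs_of_nonneg hs]
        · intro t ht
          rw [Set.uIoc_of_le (by linarith)] at ht
          exact hβnorm t (by linarith [ht.1]) y
      have b2 : ‖∫ t in (0:ℝ)..s, U t (E t y)‖ ≤ ‖y‖ * s := by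
        have hb := intervalIntegral.norm_integral_le_of_norm_le_const (C := ‖y‖)
          (a := (0:ℝ)) (b := s) (f := fun t => U t (E t y)) ?_
        · calc ‖∫ t in (0:ℝ)..s, U t (E t y)‖ ≤ ‖y‖ * |s - 0| := hb
            _ = ‖y‖ * s := by rw [sub_zero, abs_of_nonneg hs]
        · intro t ht
          rw [Set.uIoc_of_le hs] at ht
          exact hβnorm t ht.1.le y
      rw [e1, norm_smul, Real.norm_eq_abs, abs_of_pos (by positivity)]
      have h5 : ‖(∫ t in T..(T+s), U t (E t y)) - ∫ t in (0:ℝ)..s, U t (E t y)‖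
          ≤ 2 * ‖y‖ * s := by
        have := norm_sub_le (∫ t in T..(T+s), U t (E t y)) (∫ t in (0:ℝ)..s, U t (E t y))
        linarith
      calc (1/T) * ‖(∫ t in T..(T+s), U t (E t y)) - ∫ t in (0:ℝ)..s, U t (E t y)‖
          ≤ (1/T) * (2 * ‖y‖ * s) := by
            apply mul_le_mul_of_nonneg_left h5
            positivity
        _ = (2 * ‖y‖ * s) / T := by ring
    · exact Filter.Tendsto.div_atTop tendsto_const_nhds Filter.tendsto_id
  -- the orthogonal complement of K is contained in M
  have hKperp : ∀ z : H, z ∈ Kᗮ → z ∈ M := by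
    intro z hz
    set S : Set H := {v : H | ∃ s : ℝ, 0 ≤ s ∧ ∃ y : H, v = U s (E s y) - y} with hS
    have hVM : (Submodule.span ℂ S).topologicalClosure ≤ M := by
      apply Submodule.topologicalClosure_minimal
      · rw [Submodule.span_le]
        rintro v ⟨s, hs, y, rfl⟩
        exact hgen s hs y
      · exact hMclosed
    have hdd : z ∈ (Submodule.span ℂ S)ᗮᗮ := by
      rw [Submodule.mem_orthogonal]
      intro w hw
      have hw' : ∀ u ∈ Submodule.span ℂ S, ⟪u, w⟫_ℂ = 0 :=
        (Submodule.mem_orthogonal _ w).mp hw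
      -- w is fixed by all adjoints
      have hfixs : ∀ s : ℝ, 0 ≤ s → E s (U (-s) w) = w := by
        intro s hs
        have hadj : (U s ∘L E s).adjoint = E s ∘L U (-s) := by
          rw [ContinuousLinearMap.adjoint_comp, (hEsa s).adjoint_eq, hUadj]
        have hy : ∀ y : H, ⟪y, (E s ∘L U (-s)) w⟫_ℂ = ⟪y, w⟫_ℂ := by
          intro y
          rw [← hadj, ContinuousLinearMap.adjoint_inner_right]
          have hmem : U s (E s y) - y ∈ Submodule.span ℂ S :=
            Submodule.subset_span ⟨s, hs, y, rfl⟩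
          have := hw' _ hmem
          rw [inner_sub_left, sub_eq_zero] at this
          exact this
        exact ext_inner_left ℂ hy
      have hUEw : ∀ s : ℝ, 0 ≤ s → U s w = E s w := by
        intro s hs
        have h1 := congrArg (U s) (hfixs s hs)
        calc U s w = U s (E s (U (-s) w)) := h1.symm
          _ = E s (U s (U (-s) w)) := hUE s s _
          _ = E s ((U s ∘L U (-s)) w) := rfl
          _ = E s w := by rw [hUinv s]; rfl
      have hnormw : ∀ s : ℝ, 0 ≤ s → ‖NormedSpace.exp (s • G) w‖ = ‖w‖ := by
        intro s hs
        show ‖E s w‖ = ‖w‖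
        rw [← hUEw s hs, hUnorm]
      have hGw : G w = 0 := ker_of_norm_const' hGsa hGneg hnormw
      have hUw : ∀ t : ℝ, U t w = w := by
        intro t
        rcases le_or_gt 0 t with ht | ht
        · rw [hUEw t ht]
          exact exp_fixed_of_ker' hGw t
        · have h1 : U (-t) w = w := by
            rw [hUEw (-t) (by linarith)]
            exact exp_fixed_of_ker' hGw (-t)
          calc U t w = U t (U (-t) w) := by rw [h1]
            _ = (U t ∘L U (-t)) w := rfl
            _ = w := by rw [hUinv t]; rfl
      have hwK : w ∈ K := (hKmem w).mpr ⟨hUw, hGw⟩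
      exact (Submodule.mem_orthogonal K z).mp hz w hwK
    rw [Submodule.orthogonal_orthogonal_eq_closure] at hdd
    exact hVM hdd
  -- conclusion
  refine ⟨P, isSelfAdjoint_starProjection K, ?_, ?_, ?_⟩
  · ext x
    show P (P x) = P x
    rw [hPfix]
    exact (K.orthogonalProjectionOnto x).2
  · intro x
    rw [hPfix]
    exact hKmem x
  · intro x
    have hxK : P x ∈ K := (K.orthogonalProjectionOnto x).2
    have hperp : x - P x ∈ Kᗮ := Submodule.sub_starProjection_mem_orthogonal x
    have hM : Filter.Tendsto (fun T : ℝ => A T (x - P x)) Filter.atTop (nhds 0) :=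
      (hMmem _).mp (hKperp _ hperp)
    have hPfixed : ∀ T : ℝ, 0 < T → A T (P x) = P x := by
      intro T hT
      simp only [hA]
      have : ∀ t : ℝ, U t (E t (P x)) = P x := by
        intro t
        rw [exp_fixed_of_ker' hxK.2 t, hxK.1 t]
      rw [intervalIntegral.integral_congr (g := fun _ => P x) (fun t _ => this t)]
      rw [intervalIntegral.integral_const, sub_zero, smul_smul, one_div,
        inv_mul_cancel₀ hT.ne', one_smul]
    have hsplit : ∀ T : ℝ, 0 < T → A T x = P x + A T (x - P x) := by
      intro T hT
      rw [hAsub T x (P x), hPfixed T hT]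
      abel
    have hlim : Filter.Tendsto (fun T : ℝ => P x + A T (x - P x)) Filter.atTop (nhds (P x)) := by
      have := (tendsto_const_nhds :
        Filter.Tendsto (fun _ : ℝ => P x) Filter.atTop (nhds (P x))).add hM
      rw [add_zero] at this
      exact this
    have hfinal : Filter.Tendsto (fun T : ℝ => A T x) Filter.atTop (nhds (P x)) := by
      apply hlim.congr'
      filter_upwards [Filter.eventually_gt_atTop (0:ℝ)] with T hT
      exact (hsplit T hT).symm
    apply hfinal.congr
    intro T
    simp only [hA]
    congr 1
end

section
/- Suppose G' satisfies quantum detailed balance with respect to ρ_τ, Y = ∑_j W_j*W_j commutes with ρ_τ, and G(ρ_τ) = 0. Then Φ(ρ_τ) := ∑_j W_j ρ_τ W_j* = ρ_τ^{1/2} Y ρ_τ^{1/2}, and for every bounded A, Tr(Φ'(A)* Φ'(A) ρ_τ) ≤ ‖Y‖² Tr(A ρ_τ A*), i.e. ‖Φ'(A)‖_τ ≤ ‖Y‖ ‖A‖_{τ,1}. -/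
open scoped InnerProductSpace

/-- Trace along a Hilbert basis. -/
noncomputable def traceAlong {H : Type*} [NormedAddCommGroup H]
    [InnerProductSpace ℂ H] [CompleteSpace H]
    (e : HilbertBasis ℕ ℂ H) (T : H →L[ℂ] H) : ℂ :=
  ∑' i, ⟪e i, T (e i)⟫_ℂ

open scoped NNReal
set_option synthInstance.maxHeartbeats 1000000
set_option maxHeartbeats 4000000
set_option linter.unusedVariables false
set_option linter.unusedSectionVars false

namespace Stmt15Aux
variable {H : Type*} [NormedAddCommGroup H] [InnerProductSpace ℂ H] [CompleteSpace H]

lemma commute_cfc (a b : H →L[ℂ] H) (ha : IsSelfAdjoint a) (h : a * b = b * a) (f : ℝ → ℝ) :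
    (cfc f a) * b = b * (cfc f a) := by
  by_cases hf : ContinuousOn f (spectrum ℝ a)
  · rw [cfc_apply f a ha hf]
    set s := spectrum ℝ a
    set φ := cfcHom (R := ℝ) ha with hφ
    set T : Subalgebra ℝ (H →L[ℂ] H) := Subalgebra.centralizer ℝ {b} with hT
    have hTc : IsClosed (T : Set (H →L[ℂ] H)) := by
      have h1 : (T : Set (H →L[ℂ] H)) = {x | b * x = x * b} := by
        ext x
        simp [hT, Subalgebra.mem_centralizer_iff, Set.mem_centralizer_iff]
      rw [h1]
      have h2 : IsClosed {x : (H →L[ℂ] H) | b * x - x * b = 0} :=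
        isClosed_singleton.preimage (by fun_prop : Continuous fun x : H →L[ℂ] H => b * x - x * b)
      convert h2 using 1
      ext x
      simp only [Set.mem_setOf_eq, sub_eq_zero]
    set S : Subalgebra ℝ C(s, ℝ) := T.comap φ.toAlgHom with hS
    have hSc : IsClosed (S : Set C(s, ℝ)) := hTc.preimage (cfcHom_continuous ha)
    have hPoly : polynomialFunctions s ≤ S := by
      rw [polynomialFunctions.eq_adjoin_X, Algebra.adjoin_le_iff]
      rintro g (rfl : g = _)
      show φ _ ∈ T
      rw [Subalgebra.mem_centralizer_iff]
      rintro c (rfl : c = b)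
      have hx : φ (Polynomial.toContinuousMapOnAlgHom s Polynomial.X) = a := by
        rw [Polynomial.toContinuousMapOnAlgHom_apply, Polynomial.toContinuousMapOn_X_eq_restrict_id]
        exact cfcHom_id ha
      rw [hx]
      exact h.symm
    have htop : (⊤ : Subalgebra ℝ C(s, ℝ)) ≤ S := by
      rw [← polynomialFunctions.topologicalClosure s]
      exact Subalgebra.topologicalClosure_minimal hPoly hSc
    have hmem : (⟨s.restrict f, hf.restrict⟩ : C(s, ℝ)) ∈ S := htop (by trivial)
    have hmm : φ (⟨s.restrict f, hf.restrict⟩ : C(s, ℝ)) ∈ T := hmem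
    rw [Subalgebra.mem_centralizer_iff] at hmm
    exact (hmm b rfl).symm
  · rw [cfc_apply_of_not_continuousOn a hf, zero_mul, mul_zero]

lemma sa_inner_move {R : H →L[ℂ] H} (hR : IsSelfAdjoint R) (x y : H) :
    ⟪R x, y⟫_ℂ = ⟪x, R y⟫_ℂ := by
  conv_lhs => rw [← hR.star_eq]
  rw [ContinuousLinearMap.star_eq_adjoint, ContinuousLinearMap.adjoint_inner_left]

lemma star_inner_move (C : H →L[ℂ] H) (x y : H) :
    ⟪(star C) x, y⟫_ℂ = ⟪x, C y⟫_ℂ := by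
  rw [ContinuousLinearMap.star_eq_adjoint, ContinuousLinearMap.adjoint_inner_left]

lemma star_inner_move' (C : H →L[ℂ] H) (x y : H) :
    ⟪x, (star C) y⟫_ℂ = ⟪C x, y⟫_ℂ := by
  rw [ContinuousLinearMap.star_eq_adjoint, ContinuousLinearMap.adjoint_inner_right]

/-- Parseval: `∑ ‖⟪e i, u⟫‖² = ‖u‖²`. -/
lemma parseval_sq (e : HilbertBasis ℕ ℂ H) (u : H) :
    HasSum (fun i => ‖⟪e i, u⟫_ℂ‖ ^ 2) (‖u‖ ^ 2) := by
  have h := e.hasSum_inner_mul_inner u u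
  have h2 := RCLike.hasSum_re ℂ h
  have h3 : ∀ i, RCLike.re ((⟪u, e i⟫_ℂ * ⟪e i, u⟫_ℂ) : ℂ) = ‖⟪e i, u⟫_ℂ‖ ^ 2 := by
    intro i
    rw [← inner_conj_symm (e i) u, Complex.mul_conj, Complex.normSq_eq_norm_sq]
    simp only [RCLike.norm_conj]
    exact RCLike.ofReal_re _
  have h4 : RCLike.re (⟪u, u⟫_ℂ) = ‖u‖ ^ 2 := inner_self_eq_norm_sq u
  simpa only [h3, h4] using h2

lemma ofReal_tsum_of_hasSum {f : ℕ → ℝ} {a : ℝ} (hf : ∀ i, 0 ≤ f i) (h : HasSum f a) :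
    ∑' i, ENNReal.ofReal (f i) = ENNReal.ofReal a := by
  rw [← ENNReal.ofReal_tsum_of_nonneg hf h.summable, h.tsum_eq]

lemma parseval_enn (e : HilbertBasis ℕ ℂ H) (u : H) :
    ∑' i, ENNReal.ofReal (‖⟪e i, u⟫_ℂ‖ ^ 2) = ENNReal.ofReal (‖u‖ ^ 2) :=
  ofReal_tsum_of_hasSum (fun i => sq_nonneg _) (parseval_sq e u)

/-- Hilbert-Schmidt norms of `M` and `M*` agree (in `ℝ≥0∞`). -/
lemma hs_adj (e : HilbertBasis ℕ ℂ H) (M : H →L[ℂ] H) :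
    ∑' k, ENNReal.ofReal (‖M (e k)‖ ^ 2) = ∑' k, ENNReal.ofReal (‖(star M) (e k)‖ ^ 2) := by
  have h1 : ∀ k, ENNReal.ofReal (‖M (e k)‖ ^ 2)
      = ∑' i, ENNReal.ofReal (‖⟪e i, M (e k)⟫_ℂ‖ ^ 2) := fun k => (parseval_enn e _).symm
  have h2 : ∀ i, ENNReal.ofReal (‖(star M) (e i)‖ ^ 2)
      = ∑' k, ENNReal.ofReal (‖⟪e k, (star M) (e i)⟫_ℂ‖ ^ 2) := fun i => (parseval_enn e _).symm
  calc ∑' k, ENNReal.ofReal (‖M (e k)‖ ^ 2)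
      = ∑' k, ∑' i, ENNReal.ofReal (‖⟪e i, M (e k)⟫_ℂ‖ ^ 2) := by simp only [h1]
    _ = ∑' i, ∑' k, ENNReal.ofReal (‖⟪e i, M (e k)⟫_ℂ‖ ^ 2) := ENNReal.tsum_comm
    _ = ∑' i, ENNReal.ofReal (‖(star M) (e i)‖ ^ 2) := by
        refine tsum_congr fun i => ?_
        rw [h2 i]
        refine tsum_congr fun k => ?_
        congr 2
        rw [← star_inner_move M (e i) (e k), ← norm_inner_symm]
  -- done

lemma summable_of_enn {g : ℕ → ℝ} (hg : ∀ k, 0 ≤ g k)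
    (h : ∑' k, ENNReal.ofReal (g k) ≠ ⊤) : Summable g := by
  have := ENNReal.summable_toReal h
  simpa only [ENNReal.toReal_ofReal (hg _)] using this

/-- Move the trace-class factor `R * R` to the two sides. -/
lemma traceAlong_conj (e : HilbertBasis ℕ ℂ H) (R : H →L[ℂ] H) (hR : IsSelfAdjoint R)
    (hsum : Summable fun k => ‖R (e k)‖ ^ 2) (C : H →L[ℂ] H) :
    traceAlong e (C * (R * R)) = ∑' k, ⟪R (e k), C (R (e k))⟫_ℂ := by
  set v : ℕ → H := fun k => R (e k) with hv
  set f : ℕ → ℕ → ℂ := fun k i => ⟪e i, C (v k)⟫_ℂ * (starRingEnd ℂ) ⟪e i, v k⟫_ℂ with hf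
  have hk : ∀ k, HasSum (fun i => f k i) ⟪v k, C (v k)⟫_ℂ := by
    intro k
    have h := e.hasSum_inner_mul_inner (v k) (C (v k))
    refine h.congr_fun fun i => ?_
    simp only [hf]
    simp only [inner_conj_symm]
    ring
  have hi : ∀ i, HasSum (fun k => f k i) ⟪e i, (C * (R * R)) (e i)⟫_ℂ := by
    intro i
    have h := e.hasSum_inner_mul_inner (R ((star C) (e i))) (v i)
    have hxy : ⟪R ((star C) (e i)), v i⟫_ℂ = ⟪e i, (C * (R * R)) (e i)⟫_ℂ := by
      rw [sa_inner_move hR, star_inner_move]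
      simp [ContinuousLinearMap.mul_apply]
      rfl
    rw [hxy] at h
    refine h.congr_fun fun k => ?_
    have ht1 : ⟪R ((star C) (e i)), e k⟫_ℂ = ⟪e i, C (v k)⟫_ℂ := by
      rw [sa_inner_move hR, star_inner_move]
    have ht2 : ⟪e k, v i⟫_ℂ = (starRingEnd ℂ) ⟪e i, v k⟫_ℂ := by
      rw [hv]
      simp only []
      rw [← sa_inner_move hR (e k) (e i), ← inner_conj_symm]
    rw [ht1, ht2]
  have hsummable : Summable (Function.uncurry f) := by
    apply Summable.of_norm
    have hbound : ∀ p : ℕ × ℕ, ‖Function.uncurry f p‖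
        ≤ (‖⟪e p.2, C (v p.1)⟫_ℂ‖ ^ 2 + ‖⟪e p.2, v p.1⟫_ℂ‖ ^ 2) / 2 := by
      rintro ⟨k, i⟩
      have : ‖f k i‖ = ‖⟪e i, C (v k)⟫_ℂ‖ * ‖⟪e i, v k⟫_ℂ‖ := by
        rw [hf]
        simp only []
        rw [norm_mul, RCLike.norm_conj]
      rw [Function.uncurry]
      simp only []
      rw [this]
      nlinarith [sq_nonneg (‖⟪e i, C (v k)⟫_ℂ‖ - ‖⟪e i, v k⟫_ℂ‖), norm_nonneg (⟪e i, C (v k)⟫_ℂ),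
        norm_nonneg (⟪e i, v k⟫_ℂ)]
    have hs1 : Summable (fun p : ℕ × ℕ => ‖⟪e p.2, C (v p.1)⟫_ℂ‖ ^ 2) := by
      apply (summable_prod_of_nonneg (fun p => sq_nonneg _)).2
      constructor
      · exact fun k => (parseval_sq e (C (v k))).summable
      · apply Summable.of_nonneg_of_le (fun k => tsum_nonneg fun i => sq_nonneg _)
          (fun k => ?_) (hsum.mul_left (‖C‖ ^ 2))
        rw [(parseval_sq e (C (v k))).tsum_eq]
        calc ‖C (v k)‖ ^ 2 ≤ (‖C‖ * ‖v k‖) ^ 2 := by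
              have := C.le_opNorm (v k)
              nlinarith [norm_nonneg (C (v k)), norm_nonneg (v k), norm_nonneg C]
          _ = ‖C‖ ^ 2 * ‖v k‖ ^ 2 := by ring
    have hs2 : Summable (fun p : ℕ × ℕ => ‖⟪e p.2, v p.1⟫_ℂ‖ ^ 2) := by
      apply (summable_prod_of_nonneg (fun p => sq_nonneg _)).2
      refine ⟨fun k => (parseval_sq e (v k)).summable, ?_⟩
      apply Summable.of_nonneg_of_le (fun k => tsum_nonneg fun i => sq_nonneg _)
        (fun k => le_of_eq (parseval_sq e (v k)).tsum_eq) hsum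
    exact Summable.of_nonneg_of_le (fun p => norm_nonneg _) hbound
      (((hs1.add hs2).div_const 2))
  have hswap := Summable.tsum_comm' hsummable (fun k => (hk k).summable) (fun i => (hi i).summable)
  calc traceAlong e (C * (R * R)) = ∑' i, ⟪e i, (C * (R * R)) (e i)⟫_ℂ := rfl
    _ = ∑' i, ∑' k, f k i := tsum_congr fun i => (hi i).tsum_eq.symm
    _ = ∑' k, ∑' i, f k i := hswap
    _ = ∑' k, ⟪v k, C (v k)⟫_ℂ := tsum_congr fun k => (hk k).tsum_eq

lemma traceAlong_sandwich (e : HilbertBasis ℕ ℂ H) (R : H →L[ℂ] H) (hR : IsSelfAdjoint R)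
    (A : H →L[ℂ] H) :
    traceAlong e (A * (R * R) * star A) = ∑' k, ((‖R ((star A) (e k))‖ ^ 2 : ℝ) : ℂ) := by
  refine tsum_congr fun k => ?_
  have h1 : (A * (R * R) * star A) (e k) = A (R (R ((star A) (e k)))) := by
    simp [ContinuousLinearMap.mul_apply]
  rw [h1, ← star_inner_move A (e k), ← sa_inner_move hR]
  rw [inner_self_eq_norm_sq_to_K]
  norm_cast

end Stmt15Aux

open Stmt15Aux

/-- Suppose `G'(A) = Φ'(A) − ½{Y,A}` satisfies quantum detailed balance
with respect to the strictly positive trace-class `ρ = ρhalf²` (symmetry w.r.t.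
`⟨A,B⟩_τ = Tr(A* B ρ)`), `Y = ∑_j W_j* W_j` commutes with `ρ`, and `G(ρ) = 0`, i.e.
`Φ(ρ) = ∑_j W_j ρ W_j* = ½{Y, ρ}`.  Then `Φ(ρ) = ρ^{1/2} Y ρ^{1/2}`, and for every
bounded `A`, `Tr(Φ'(A)* Φ'(A) ρ) ≤ ‖Y‖² Tr(A ρ A*)`, i.e. `‖Φ'(A)‖_τ ≤ ‖Y‖ ‖A‖_{τ,1}`. -/
theorem stmt15
    {H : Type*} [NormedAddCommGroup H] [InnerProductSpace ℂ H] [CompleteSpace H]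
    (e : HilbertBasis ℕ ℂ H) (ρhalf ρ : H →L[ℂ] H)
    (hρ : ρ = ρhalf * ρhalf)
    (hpos : ρhalf.IsPositive) (hinj : Function.Injective ρhalf)
    (htrρ : Summable fun i => (⟪e i, ρ (e i)⟫_ℂ).re)
    (W : ℕ → H →L[ℂ] H) (Y : H →L[ℂ] H)
    (hY : ∀ x y : H, HasSum (fun j => ⟪x, (star (W j) * W j) y⟫_ℂ) ⟪x, Y y⟫_ℂ)
    (hcomm : Y * ρ = ρ * Y)
    (Φ' : (H →L[ℂ] H) → (H →L[ℂ] H))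
    (hΦ' : ∀ (A : H →L[ℂ] H) (x y : H),
      HasSum (fun j => ⟪x, (star (W j) * A * W j) y⟫_ℂ) ⟪x, Φ' A y⟫_ℂ)
    (hQDB : ∀ A B : H →L[ℂ] H,
      traceAlong e (star (Φ' A - (1/2 : ℂ) • (Y * A + A * Y)) * B * ρ) =
        traceAlong e (star A * (Φ' B - (1/2 : ℂ) • (Y * B + B * Y)) * ρ))
    (Φρ : H →L[ℂ] H)
    (hΦρ : ∀ x y : H, HasSum (fun j => ⟪x, (W j * ρ * star (W j)) y⟫_ℂ) ⟪x, Φρ y⟫_ℂ)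
    (hGρ : Φρ = (1/2 : ℂ) • (Y * ρ + ρ * Y)) :
    Φρ = ρhalf * Y * ρhalf ∧
      ∀ A : H →L[ℂ] H,
        (traceAlong e (star (Φ' A) * Φ' A * ρ)).re ≤
          ‖Y‖ ^ 2 * (traceAlong e (A * ρ * star A)).re := by
  -- selfadjointness and positivity facts
  have h0h : 0 ≤ ρhalf := (ContinuousLinearMap.nonneg_iff_isPositive _).2 hpos
  have hsah : IsSelfAdjoint ρhalf := hpos.isSelfAdjoint
  have h0ρ : 0 ≤ ρ := by
    rw [hρ]
    have h := star_mul_self_nonneg ρhalf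
    rwa [hsah.star_eq] at h
  have hsaρ : IsSelfAdjoint ρ := ((ContinuousLinearMap.nonneg_iff_isPositive _).1 h0ρ).isSelfAdjoint
  -- `ρhalf` commutes with `Y`
  have hcomm2 : ρhalf * Y = Y * ρhalf := by
    have hs : CFC.sqrt ρ = ρhalf := CFC.sqrt_unique hρ.symm h0h
    have hc : cfc (fun x : ℝ => ((NNReal.sqrt x.toNNReal : ℝ≥0) : ℝ)) ρ = ρhalf := by
      rw [← cfc_nnreal_eq_real _ ρ h0ρ, ← CFC.sqrt_eq_cfc]
      exact hs
    rw [← hc]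
    exact commute_cfc ρ Y hsaρ hcomm.symm _
  -- part 1
  have hpart1 : Φρ = ρhalf * Y * ρhalf := by
    have e1 : ρhalf * Y * ρhalf = Y * ρ := by
      rw [hcomm2, mul_assoc, ← hρ]
    rw [hGρ, e1, ← hcomm, ← two_smul ℂ (Y * ρ), smul_smul]
    norm_num
  refine ⟨hpart1, fun A => ?_⟩
  -- notation
  set T : H →L[ℂ] H := Φ' A with hT
  set v : ℕ → H := fun k => ρhalf (e k) with hvdef
  set w : ℕ → H := fun k => ρhalf ((star A) (e k)) with hwdef
  -- `⟪z, ρ z⟫.re = ‖ρhalf z‖²`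
  have hrin : ∀ z : H, (⟪z, ρ (z)⟫_ℂ).re = ‖ρhalf z‖ ^ 2 := by
    intro z
    rw [hρ]
    have : (ρhalf * ρhalf) z = ρhalf (ρhalf z) := rfl
    rw [this, ← sa_inner_move hsah, inner_self_eq_norm_sq_to_K]
    norm_cast
  have hv : Summable fun k => ‖v k‖ ^ 2 := by
    refine htrρ.congr fun k => ?_
    exact (hrin (e k))
  -- pointwise facts about Y and W
  have hptY : ∀ u : H, HasSum (fun j => ‖W j u‖ ^ 2) ((⟪u, Y u⟫_ℂ).re) := by
    intro u
    have h := RCLike.hasSum_re ℂ (hY u u)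
    refine h.congr_fun fun j => ?_
    have h1 : (star (W j) * W j) u = (star (W j)) (W j u) := rfl
    rw [h1, star_inner_move' (W j) u (W j u), inner_self_eq_norm_sq_to_K]
    simp only [RCLike.re_to_complex]
    norm_cast
  -- upper bound for the quadratic form of Y
  have hYb : ∀ u : H, (⟪u, Y u⟫_ℂ).re ≤ ‖Y‖ * ‖u‖ ^ 2 := by
    intro u
    calc (⟪u, Y u⟫_ℂ).re ≤ ‖⟪u, Y u⟫_ℂ‖ := Complex.re_le_norm _
      _ ≤ ‖u‖ * ‖Y u‖ := norm_inner_le_norm _ _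
      _ ≤ ‖u‖ * (‖Y‖ * ‖u‖) := by
          have := Y.le_opNorm u
          exact mul_le_mul_of_nonneg_left this (norm_nonneg u)
      _ = ‖Y‖ * ‖u‖ ^ 2 := by ring
  -- expansion of ‖T v k‖² as a sum over j
  have hTk : ∀ k, HasSum (fun j => (⟪W j (T (v k)), A (W j (v k))⟫_ℂ).re) (‖T (v k)‖ ^ 2) := by
    intro k
    have h := RCLike.hasSum_re ℂ (hΦ' A (T (v k)) (v k))
    have h2 : RCLike.re ⟪T (v k), T (v k)⟫_ℂ = ‖T (v k)‖ ^ 2 := inner_self_eq_norm_sq _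
    rw [h2] at h
    refine h.congr_fun fun j => ?_
    congr 1
    have h1 : (star (W j) * A * W j) (v k) = (star (W j)) (A (W j (v k))) := rfl
    rw [h1, star_inner_move' (W j)]
  -- Φρ quadratic form expansion
  have hΦρpt : ∀ x : H, HasSum (fun j => ‖ρhalf ((star (W j)) x)‖ ^ 2) ((⟪x, Φρ x⟫_ℂ).re) := by
    intro x
    have h := RCLike.hasSum_re ℂ (hΦρ x x)
    refine h.congr_fun fun j => ?_
    have h1 : (W j * ρ * star (W j)) x = (W j) (ρ ((star (W j)) x)) := rfl
    rw [h1, ← star_inner_move (W j) x]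
    exact (hrin _).symm
  -- summability of A-twisted sums
  have hWsq : ∀ u : H, Summable fun j => ‖W j u‖ ^ 2 := fun u => (hptY u).summable
  have hq_sum : ∀ k, Summable fun j => ‖A (W j (v k))‖ ^ 2 := by
    intro k
    refine Summable.of_nonneg_of_le (fun j => sq_nonneg _) (fun j => ?_)
      ((hWsq (v k)).mul_left (‖A‖ ^ 2))
    have := A.le_opNorm (W j (v k))
    nlinarith [norm_nonneg (A (W j (v k))), norm_nonneg (W j (v k)), norm_nonneg A]
  set q : ℕ → ℝ := fun k => ∑' j, ‖A (W j (v k))‖ ^ 2 with hqdef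
  set p : ℕ → ℝ := fun k => (⟪T (v k), Y (T (v k))⟫_ℂ).re with hpdef
  have hq0 : ∀ k, 0 ≤ q k := fun k => tsum_nonneg fun j => sq_nonneg _
  -- summability of the main sequence
  have hS_sum : Summable fun k => ‖T (v k)‖ ^ 2 := by
    refine Summable.of_nonneg_of_le (fun k => sq_nonneg _) (fun k => ?_)
      (hv.mul_left (‖T‖ ^ 2))
    have := T.le_opNorm (v k)
    nlinarith [norm_nonneg (T (v k)), norm_nonneg (v k), norm_nonneg T]
  have hp_sum : Summable p := by
    refine Summable.of_nonneg_of_le (fun k => ?_) (fun k => ?_) (hS_sum.mul_left ‖Y‖)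
    · show 0 ≤ (⟪T (v k), Y (T (v k))⟫_ℂ).re
      rw [← (hptY (T (v k))).tsum_eq]
      exact tsum_nonneg fun j => sq_nonneg _
    · exact hYb (T (v k))
  set S : ℝ := ∑' k, ‖T (v k)‖ ^ 2 with hSdef
  have hPs : ∑' k, p k ≤ ‖Y‖ * S := by
    calc ∑' k, p k ≤ ∑' k, ‖Y‖ * ‖T (v k)‖ ^ 2 :=
          Summable.tsum_le_tsum (fun k => hYb (T (v k))) hp_sum (hS_sum.mul_left ‖Y‖)
      _ = ‖Y‖ * S := tsum_mul_left
  -- ENNReal bookkeeping for the Q-term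
  have hq_enn : ∀ k, ∑' j, ENNReal.ofReal (‖A (W j (v k))‖ ^ 2) = ENNReal.ofReal (q k) :=
    fun k => ofReal_tsum_of_hasSum (fun j => sq_nonneg _) (hq_sum k).hasSum
  have hw_enn : ∀ j : ℕ, ∑' k, ENNReal.ofReal (‖A (W j (v k))‖ ^ 2)
      = ∑' k, ENNReal.ofReal (‖ρhalf ((star (W j)) ((star A) (e k)))‖ ^ 2) := by
    intro j
    have h2 : star (A * W j * ρhalf) = ρhalf * (star (W j) * star A) := by
      rw [star_mul, star_mul, hsah.star_eq]
    calc ∑' k, ENNReal.ofReal (‖A (W j (v k))‖ ^ 2)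
        = ∑' k, ENNReal.ofReal (‖(A * W j * ρhalf) (e k)‖ ^ 2) := rfl
      _ = ∑' k, ENNReal.ofReal (‖(star (A * W j * ρhalf)) (e k)‖ ^ 2) := hs_adj e _
      _ = ∑' k, ENNReal.ofReal (‖ρhalf ((star (W j)) ((star A) (e k)))‖ ^ 2) := by
          rw [h2]
          exact tsum_congr fun k => rfl
  have hΦρform : ∀ x : H, (⟪x, Φρ x⟫_ℂ).re = (⟪ρhalf x, Y (ρhalf x)⟫_ℂ).re := by
    intro x
    rw [hpart1]
    have h1 : (ρhalf * Y * ρhalf) x = ρhalf (Y (ρhalf x)) := rfl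
    rw [h1, ← sa_inner_move hsah]
  -- `w` is square-summable
  have hw_enn2 : ∑' k, ENNReal.ofReal (‖w k‖ ^ 2) = ∑' k, ENNReal.ofReal (‖A (v k)‖ ^ 2) := by
    have h2 : star (ρhalf * star A) = A * ρhalf := by
      rw [star_mul, star_star, hsah.star_eq]
    calc ∑' k, ENNReal.ofReal (‖w k‖ ^ 2)
        = ∑' k, ENNReal.ofReal (‖(ρhalf * star A) (e k)‖ ^ 2) := rfl
      _ = ∑' k, ENNReal.ofReal (‖(star (ρhalf * star A)) (e k)‖ ^ 2) := hs_adj e _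
      _ = ∑' k, ENNReal.ofReal (‖A (v k)‖ ^ 2) := by
          rw [h2]
          exact tsum_congr fun k => rfl
  have hAv_sum : Summable fun k => ‖A (v k)‖ ^ 2 := by
    refine Summable.of_nonneg_of_le (fun k => sq_nonneg _) (fun k => ?_)
      (hv.mul_left (‖A‖ ^ 2))
    have := A.le_opNorm (v k)
    nlinarith [norm_nonneg (A (v k)), norm_nonneg (v k), norm_nonneg A]
  have hw_sum : Summable fun k => ‖w k‖ ^ 2 := by
    apply summable_of_enn (fun k => sq_nonneg _)
    rw [hw_enn2, ofReal_tsum_of_hasSum (fun k => sq_nonneg _) hAv_sum.hasSum]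
    exact ENNReal.ofReal_ne_top
  set T2 : ℝ := ∑' k, ‖w k‖ ^ 2 with hT2def
  have hT2nn : 0 ≤ T2 := tsum_nonneg fun k => sq_nonneg _
  -- the crucial bound on ∑ q
  have hQbound : ∑' k, ENNReal.ofReal (q k) ≤ ENNReal.ofReal (‖Y‖ * T2) := by
    have hx : ∀ k : ℕ, ρhalf ((star A) (e k)) = w k := fun k => rfl
    calc ∑' k, ENNReal.ofReal (q k)
        = ∑' k, ∑' j, ENNReal.ofReal (‖A (W j (v k))‖ ^ 2) := (tsum_congr hq_enn).symm
      _ = ∑' j, ∑' k, ENNReal.ofReal (‖A (W j (v k))‖ ^ 2) := ENNReal.tsum_comm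
      _ = ∑' j, ∑' k, ENNReal.ofReal (‖ρhalf ((star (W j)) ((star A) (e k)))‖ ^ 2) :=
          tsum_congr hw_enn
      _ = ∑' k, ∑' j, ENNReal.ofReal (‖ρhalf ((star (W j)) ((star A) (e k)))‖ ^ 2) :=
          ENNReal.tsum_comm
      _ = ∑' k, ENNReal.ofReal ((⟪(star A) (e k), Φρ ((star A) (e k))⟫_ℂ).re) :=
          tsum_congr fun k =>
            ofReal_tsum_of_hasSum (fun j => sq_nonneg _) (hΦρpt ((star A) (e k)))
      _ ≤ ∑' k, ENNReal.ofReal (‖Y‖ * ‖w k‖ ^ 2) := by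
          refine ENNReal.tsum_le_tsum fun k => ENNReal.ofReal_le_ofReal ?_
          rw [hΦρform, hx k]
          exact hYb (w k)
      _ = ENNReal.ofReal (‖Y‖ * T2) := by
          refine ofReal_tsum_of_hasSum (fun k => mul_nonneg (norm_nonneg Y) (sq_nonneg _)) ?_
          exact hw_sum.hasSum.mul_left ‖Y‖
  have hQ_sum : Summable q := by
    apply summable_of_enn hq0
    exact ne_top_of_le_ne_top ENNReal.ofReal_ne_top hQbound
  have hQs : ∑' k, q k ≤ ‖Y‖ * T2 := by
    have h := hQbound
    rw [ofReal_tsum_of_hasSum hq0 hQ_sum.hasSum] at h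
    exact (ENNReal.ofReal_le_ofReal_iff (mul_nonneg (norm_nonneg Y) hT2nn)).1 h
  -- the young-inequality estimate
  have key : ∀ c : ℝ, 0 < c → S ≤ (c * (‖Y‖ * S) + c⁻¹ * (‖Y‖ * T2)) / 2 := by
    intro c hc
    have hsk : ∀ k, ‖T (v k)‖ ^ 2 ≤ (c * p k + c⁻¹ * q k) / 2 := by
      intro k
      have hRHS : HasSum (fun j => (c * ‖W j (T (v k))‖ ^ 2 + c⁻¹ * ‖A (W j (v k))‖ ^ 2) / 2)
          ((c * p k + c⁻¹ * q k) / 2) :=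
        (((hptY (T (v k))).mul_left c).add ((hq_sum k).hasSum.mul_left c⁻¹)).div_const 2
      refine hasSum_le (fun j => ?_) (hTk k) hRHS
      set a : ℝ := ‖W j (T (v k))‖ with hadef
      set b : ℝ := ‖A (W j (v k))‖ with hbdef
      have h1 : (⟪W j (T (v k)), A (W j (v k))⟫_ℂ).re ≤ a * b := by
        refine le_trans (Complex.re_le_norm _) ?_
        exact norm_inner_le_norm _ _
      have h4 : 2 * (a * b) * c ≤ (c * a ^ 2 + c⁻¹ * b ^ 2) * c := by
        have hcc : c⁻¹ * c = 1 := inv_mul_cancel₀ hc.ne'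
        nlinarith [sq_nonneg (c * a - b)]
      have h5 : a * b ≤ (c * a ^ 2 + c⁻¹ * b ^ 2) / 2 := by
        have := le_of_mul_le_mul_right h4 hc
        linarith
      linarith
    have hsum2 : Summable fun k => (c * p k + c⁻¹ * q k) / 2 :=
      ((hp_sum.mul_left c).add (hQ_sum.mul_left c⁻¹)).div_const 2
    have h6 : S ≤ ∑' k, (c * p k + c⁻¹ * q k) / 2 := Summable.tsum_le_tsum hsk hS_sum hsum2
    have h7 : ∑' k, (c * p k + c⁻¹ * q k) / 2 = (c * ∑' k, p k + c⁻¹ * ∑' k, q k) / 2 :=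
      (((hp_sum.hasSum.mul_left c).add (hQ_sum.hasSum.mul_left c⁻¹)).div_const 2).tsum_eq
    rw [h7] at h6
    have h8 : c * ∑' k, p k ≤ c * (‖Y‖ * S) := mul_le_mul_of_nonneg_left hPs hc.le
    have h9 : c⁻¹ * ∑' k, q k ≤ c⁻¹ * (‖Y‖ * T2) :=
      mul_le_mul_of_nonneg_left hQs (inv_pos.2 hc).le
    linarith
  -- rewrite the goal
  have hLHS : (traceAlong e (star T * T * ρ)).re = S := by
    have h0 : star T * T * ρ = star T * T * (ρhalf * ρhalf) := by rw [hρ]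
    have h := traceAlong_conj e ρhalf hsah hv (star T * T)
    rw [h0, h]
    have h2 : ∀ k, ⟪v k, (star T * T) (v k)⟫_ℂ = ((‖T (v k)‖ ^ 2 : ℝ) : ℂ) := by
      intro k
      have h3 : (star T * T) (v k) = (star T) (T (v k)) := rfl
      rw [h3, star_inner_move' T (v k) (T (v k)), inner_self_eq_norm_sq_to_K]
      norm_cast
    rw [tsum_congr h2, ← Complex.ofReal_tsum]
    exact Complex.ofReal_re _
  have hRHS : (traceAlong e (A * ρ * star A)).re = T2 := by
    have h0 : A * ρ * star A = A * (ρhalf * ρhalf) * star A := by rw [hρ]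
    have h := traceAlong_sandwich e ρhalf hsah A
    rw [h0, h, ← Complex.ofReal_tsum]
    exact Complex.ofReal_re _
  rw [hLHS, hRHS]
  rcases eq_or_lt_of_le (norm_nonneg Y) with h0 | h0
  · have hk1 := key 1 one_pos
    rw [← h0] at hk1 ⊢
    simp only [zero_mul, mul_zero, one_mul, inv_one, add_zero, zero_add, zero_div,
      zero_pow, pow_two] at hk1 ⊢
    linarith
  · have hk1 := key ‖Y‖⁻¹ (inv_pos.2 h0)
    have h1 : ‖Y‖⁻¹ * (‖Y‖ * S) = S := by field_simp
    have h2 : (‖Y‖⁻¹)⁻¹ * (‖Y‖ * T2) = ‖Y‖ ^ 2 * T2 := by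
      rw [inv_inv]
      ring
    rw [h1, h2] at hk1
    linarith
end

section
/- Suppose ⟨A, G'(A)⟩_τ = −½ ∑_j Tr([W_j,A]*[W_j,A]ρ_τ) with ρ_τ > 0, G'(1) = 0, G' is a *-map, and the only bounded operators commuting with all W_j and all W_j* are scalar multiples of the identity. Then every bounded operator A with G'(A) = 0 is a scalar multiple of the identity, i.e. Null(G') ∩ B(H) = ℂ·1. -/
open scoped InnerProductSpace

section Aux

variable {H : Type*} [NormedAddCommGroup H] [InnerProductSpace ℂ H] [CompleteSpace H]

lemma sq_summable_comp (C : H →L[ℂ] H) {f : ℕ → H}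
    (hf : Summable fun i => ‖f i‖ ^ 2) : Summable fun i => ‖C (f i)‖ ^ 2 := by
  refine Summable.of_nonneg_of_le (fun i => sq_nonneg _) (fun i => ?_) (hf.mul_left (‖C‖ ^ 2))
  calc ‖C (f i)‖ ^ 2 ≤ (‖C‖ * ‖f i‖) ^ 2 :=
        pow_le_pow_left₀ (norm_nonneg _) (C.le_opNorm _) 2
    _ = ‖C‖ ^ 2 * ‖f i‖ ^ 2 := mul_pow _ _ _

lemma inner_sa {A : H →L[ℂ] H} (hsa : ContinuousLinearMap.adjoint A = A) (x y : H) :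
    ⟪x, A y⟫_ℂ = ⟪A x, y⟫_ℂ := by
  rw [← ContinuousLinearMap.adjoint_inner_left, hsa]

/-- Cyclicity of the trace for "Hilbert-Schmidt" operators. -/
lemma trace_cyclic (e : HilbertBasis ℕ ℂ H) (S T : H →L[ℂ] H)
    (hS : Summable fun k => ‖S (e k)‖ ^ 2) (hT : Summable fun i => ‖T (e i)‖ ^ 2) :
    ∑' i, ⟪e i, S (T (e i))⟫_ℂ = ∑' k, ⟪e k, T (S (e k))⟫_ℂ := by
  set a : ℕ × ℕ → ℂ := fun p => ⟪e p.1, S (e p.2)⟫_ℂ * ⟪e p.2, T (e p.1)⟫_ℂ with ha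
  have hrow : ∀ i, HasSum (fun k => a (i, k)) ⟪e i, S (T (e i))⟫_ℂ := by
    intro i
    have h := e.hasSum_inner_mul_inner ((ContinuousLinearMap.adjoint S) (e i)) (T (e i))
    simpa only [ContinuousLinearMap.adjoint_inner_left] using h
  have hcol : ∀ k, HasSum (fun i => a (i, k)) ⟪e k, T (S (e k))⟫_ℂ := by
    intro k
    have h := e.hasSum_inner_mul_inner ((ContinuousLinearMap.adjoint T) (e k)) (S (e k))
    simp only [ContinuousLinearMap.adjoint_inner_left] at h
    have heq : (fun i => a (i, k)) = fun i => ⟪e k, T (e i)⟫_ℂ * ⟪e i, S (e k)⟫_ℂ := by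
      funext i; exact mul_comm _ _
    rw [heq]; exact h
  have hSfam : Summable fun p : ℕ × ℕ => ‖⟪e p.1, S (e p.2)⟫_ℂ‖ ^ 2 := by
    have hswap : Summable fun p : ℕ × ℕ => ‖⟪e p.2, S (e p.1)⟫_ℂ‖ ^ 2 := by
      rw [summable_prod_of_nonneg (fun p => sq_nonneg _)]
      refine ⟨fun k => (parseval_sq e (S (e k))).summable, ?_⟩
      exact hS.congr fun k => ((parseval_sq e (S (e k))).tsum_eq).symm
    have h := (Equiv.prodComm ℕ ℕ).summable_iff.mpr hswap
    exact h.congr fun p => rfl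
  have hTfam : Summable fun p : ℕ × ℕ => ‖⟪e p.2, T (e p.1)⟫_ℂ‖ ^ 2 := by
    rw [summable_prod_of_nonneg (fun p => sq_nonneg _)]
    refine ⟨fun i => (parseval_sq e (T (e i))).summable, ?_⟩
    exact hT.congr fun i => ((parseval_sq e (T (e i))).tsum_eq).symm
  have hasum : Summable a := by
    refine Summable.of_norm_bounded (((hSfam.add hTfam)).mul_left (1/2)) fun p => ?_
    rw [ha]
    simp only [norm_mul]
    nlinarith [sq_nonneg (‖⟪e p.1, S (e p.2)⟫_ℂ‖ - ‖⟪e p.2, T (e p.1)⟫_ℂ‖),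
      norm_nonneg (⟪e p.1, S (e p.2)⟫_ℂ), norm_nonneg (⟪e p.2, T (e p.1)⟫_ℂ)]
  have hasum' : Summable (Function.uncurry fun i k => a (i, k)) := hasum
  calc ∑' i, ⟪e i, S (T (e i))⟫_ℂ = ∑' i, ∑' k, a (i, k) :=
        tsum_congr fun i => ((hrow i).tsum_eq).symm
    _ = ∑' k, ∑' i, a (i, k) := (hasum'.tsum_comm).symm
    _ = ∑' k, ⟪e k, T (S (e k))⟫_ℂ := tsum_congr fun k => (hcol k).tsum_eq

lemma trace_pos_part (e : HilbertBasis ℕ ℂ H) (ρhalf : H →L[ℂ] H)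
    (hsa : ContinuousLinearMap.adjoint ρhalf = ρhalf)
    (hS : Summable fun i => ‖ρhalf (e i)‖ ^ 2) (B : H →L[ℂ] H) :
    traceAlong e (star B * B * (ρhalf * ρhalf)) = ∑' i, ((‖B (ρhalf (e i))‖ ^ 2 : ℝ) : ℂ) := by
  set T : H →L[ℂ] H := star B * B * ρhalf with hTdef
  have hT : Summable fun i => ‖T (e i)‖ ^ 2 := by
    have h := sq_summable_comp (star B * B) (f := fun i => ρhalf (e i)) hS
    exact h.congr fun i => by rw [hTdef]; rfl
  have key : ∑' i, ⟪e i, T (ρhalf (e i))⟫_ℂ = ∑' i, ⟪e i, ρhalf (T (e i))⟫_ℂ :=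
    (trace_cyclic e ρhalf T hS hT).symm
  have e1 : traceAlong e (star B * B * (ρhalf * ρhalf)) = ∑' i, ⟪e i, T (ρhalf (e i))⟫_ℂ := by
    have hmm : star B * B * (ρhalf * ρhalf) = T * ρhalf := by rw [hTdef]; exact (mul_assoc _ _ _).symm
    unfold traceAlong
    rw [hmm]
    rfl
  rw [e1, key]
  refine tsum_congr fun i => ?_
  have h5 : ⟪e i, ρhalf (T (e i))⟫_ℂ = ⟪ρhalf (e i), T (e i)⟫_ℂ := inner_sa hsa _ _
  rw [h5, hTdef]
  have hTapp : (star B * B * ρhalf) (e i)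
      = (ContinuousLinearMap.adjoint B) (B (ρhalf (e i))) := by
    simp [ContinuousLinearMap.mul_apply, ContinuousLinearMap.star_eq_adjoint]
  rw [hTapp, ContinuousLinearMap.adjoint_inner_right, inner_self_eq_norm_sq_to_K]
  norm_cast

end Aux

/-- Suppose the Lindblad generator `G'` (a `*`-map with `G'(1) = 0`)
satisfies the quadratic-form identity
`⟨A, G'(A)⟩_τ = −½ ∑_j Tr([W_j,A]* [W_j,A] ρ)` (as a convergent sum) for the strictly
positive trace-class `ρ = ρhalf²`, and assume the irreducibility condition (U): any
bounded operator commuting with all `W_j` and all `W_j*` is a scalar multiple of the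
identity.  Then every bounded `A` with `G'(A) = 0` is a scalar multiple of `1`, i.e.
`Null(G') ∩ B(H) = ℂ·1`. -/
theorem stmt18
    {H : Type*} [NormedAddCommGroup H] [InnerProductSpace ℂ H] [CompleteSpace H]
    (e : HilbertBasis ℕ ℂ H) (ρhalf ρ : H →L[ℂ] H)
    (hρ : ρ = ρhalf * ρhalf)
    (hpos : ρhalf.IsPositive) (hinj : Function.Injective ρhalf)
    (htrρ : Summable fun i => (⟪e i, ρ (e i)⟫_ℂ).re)
    (W : ℕ → H →L[ℂ] H)
    (G' : (H →L[ℂ] H) → (H →L[ℂ] H))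
    (hstar : ∀ A : H →L[ℂ] H, G' (star A) = star (G' A))
    (hone : G' 1 = 0)
    (hquad : ∀ A : H →L[ℂ] H,
      HasSum
        (fun j => traceAlong e (star (W j * A - A * W j) * (W j * A - A * W j) * ρ))
        (-2 * traceAlong e (star A * G' A * ρ)))
    (hU : ∀ A : H →L[ℂ] H,
      (∀ j, W j * A = A * W j ∧ star (W j) * A = A * star (W j)) →
        ∃ c : ℂ, A = c • (1 : H →L[ℂ] H)) :
    ∀ A : H →L[ℂ] H, G' A = 0 → ∃ c : ℂ, A = c • (1 : H →L[ℂ] H) := by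
  have hsa : ContinuousLinearMap.adjoint ρhalf = ρhalf :=
    ContinuousLinearMap.isSelfAdjoint_iff'.mp hpos.isSelfAdjoint
  have hSsum : Summable fun i => ‖ρhalf (e i)‖ ^ 2 := by
    refine htrρ.congr fun i => ?_
    rw [hρ, ContinuousLinearMap.mul_apply]
    have h6 : ⟪e i, ρhalf (ρhalf (e i))⟫_ℂ = ⟪ρhalf (e i), ρhalf (e i)⟫_ℂ := inner_sa hsa _ _
    rw [h6, inner_self_eq_norm_sq_to_K]
    norm_cast
  -- dense range of ρhalf
  have hdense : Dense (Set.range ρhalf) := by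
    have htop : (LinearMap.range (ρhalf : H →ₗ[ℂ] H)).topologicalClosure = ⊤ := by
      rw [Submodule.topologicalClosure_eq_top_iff, Submodule.eq_bot_iff]
      intro x hx
      have h2 : ⟪ρhalf (ρhalf x), x⟫_ℂ = 0 :=
        (Submodule.mem_orthogonal _ _).mp hx _ ⟨ρhalf x, rfl⟩
      have h3 : ⟪ρhalf x, ρhalf x⟫_ℂ = 0 := (inner_sa hsa _ _).trans h2
      have h4 : ρhalf x = 0 := inner_self_eq_zero.mp h3
      exact hinj (h4.trans (map_zero ρhalf).symm)
    have hcl : closure ((LinearMap.range (ρhalf : H →ₗ[ℂ] H) : Submodule ℂ H) : Set H) = Set.univ := by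
      rw [← Submodule.topologicalClosure_coe, htop]
      rfl
    rw [dense_iff_closure_eq]
    have hr : (Set.range ⇑ρhalf) = ((LinearMap.range (ρhalf : H →ₗ[ℂ] H) : Submodule ℂ H) : Set H) := by
      ext y; simp [LinearMap.mem_range]
    rw [hr, hcl]
  -- density of span of the basis
  have hespan : Dense ((Submodule.span ℂ (Set.range fun i => e i) : Submodule ℂ H) : Set H) := by
    have h := e.dense_span
    rw [dense_iff_closure_eq, ← Submodule.topologicalClosure_coe, h]
    rfl
  -- kernel elements commute with each W j
  have hcomm : ∀ A : H →L[ℂ] H, G' A = 0 → ∀ j, W j * A = A * W j := by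
    intro A hA j
    have h0 : HasSum
        (fun j' => traceAlong e (star (W j' * A - A * W j') * (W j' * A - A * W j') * ρ)) 0 := by
      have h := hquad A
      rw [hA] at h
      simpa [traceAlong] using h
    have htr : ∀ j', traceAlong e (star (W j' * A - A * W j') * (W j' * A - A * W j') * ρ)
        = ((∑' i, (‖(W j' * A - A * W j') (ρhalf (e i))‖ ^ 2 : ℝ) : ℝ) : ℂ) := by
      intro j'
      rw [hρ, trace_pos_part e ρhalf hsa hSsum (W j' * A - A * W j'), Complex.ofReal_tsum]
    have h0' : HasSum
        (fun j' => (∑' i, (‖(W j' * A - A * W j') (ρhalf (e i))‖ ^ 2 : ℝ))) 0 := by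
      have h1 := h0.mapL Complex.reCLM
      rw [map_zero] at h1
      have heq : (fun j' => (∑' i, (‖(W j' * A - A * W j') (ρhalf (e i))‖ ^ 2 : ℝ)))
          = fun j' => Complex.reCLM
              (traceAlong e (star (W j' * A - A * W j') * (W j' * A - A * W j') * ρ)) := by
        funext j'
        rw [htr j']
        simp
      rw [heq]
      exact h1
    have hjle : (∑' i, (‖(W j * A - A * W j) (ρhalf (e i))‖ ^ 2 : ℝ)) ≤ 0 :=
      le_hasSum h0' j fun j' _ => tsum_nonneg fun i => sq_nonneg _
    have hjz : (∑' i, (‖(W j * A - A * W j) (ρhalf (e i))‖ ^ 2 : ℝ)) = 0 :=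
      le_antisymm hjle (tsum_nonneg fun i => sq_nonneg _)
    have hsum : Summable fun i => ‖(W j * A - A * W j) (ρhalf (e i))‖ ^ 2 :=
      sq_summable_comp (W j * A - A * W j) (f := fun i => ρhalf (e i)) hSsum
    have hzero : ∀ i, (W j * A - A * W j) (ρhalf (e i)) = 0 := by
      intro i
      have h7 : ‖(W j * A - A * W j) (ρhalf (e i))‖ ^ 2 ≤ 0 := by
        rw [← hjz]
        exact hsum.le_tsum i fun i' _ => sq_nonneg _
      have h8 : ‖(W j * A - A * W j) (ρhalf (e i))‖ = 0 := by nlinarith [norm_nonneg ((W j * A - A * W j) (ρhalf (e i)))]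
      exact norm_eq_zero.mp h8
    have hBρ : (W j * A - A * W j) * ρhalf = 0 := by
      apply ContinuousLinearMap.ext_on hespan
      rintro x ⟨i, rfl⟩
      simpa [ContinuousLinearMap.mul_apply] using hzero i
    have hB0 : (W j * A - A * W j) = 0 := by
      have hfun : ⇑(W j * A - A * W j) = ⇑(0 : H →L[ℂ] H) := by
        refine Continuous.ext_on hdense (W j * A - A * W j).continuous
          (0 : H →L[ℂ] H).continuous ?_
        rintro x ⟨y, rfl⟩
        have := ContinuousLinearMap.ext_iff.mp hBρ y
        simpa [ContinuousLinearMap.mul_apply] using this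
      exact ContinuousLinearMap.ext fun x => congrFun hfun x
    exact sub_eq_zero.mp hB0
  intro A hA
  have h1 := hcomm A hA
  have h2 := hcomm (star A) (by rw [hstar, hA, star_zero])
  refine hU A fun j => ⟨h1 j, ?_⟩
  have h3 := congrArg star (h2 j)
  rw [star_mul, star_mul, star_star] at h3
  exact h3.symm
end
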